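/- arXiv:2108.00991 — 4 statements merged into one kernel-verified Lean document; each statement's English description precedes it below -/
import Mathlib

section
/- For every even integer k ≥ 4, each of the colorings χ(k, k/2 − 1) and χ(k−1, k/2) of the complete graph on k − 1 + k/2 vertices contains exactly k!/2 monochromatic copies of the path P_k. -/
open Finset

/-- A path copy as a sequence: `k` distinct vertices with consecutive vertices adjacent. -/
def IsPathSeq {V : Type*} (G : SimpleGraph V) (k : ℕ) (f : Fin k → V) : Prop :=
  Function.Injective f ∧ ∀ (i : Fin k) (h : i.val + 1 < k), G.Adj (f i) (f ⟨i.val + 1, h⟩)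

/-- Number of copies of the path `P_k` in `G` (sequences identified with their reversals). -/
noncomputable def pathCount {V : Type*} (G : SimpleGraph V) (k : ℕ) : ℕ :=
  Nat.card {f : Fin k → V // IsPathSeq G k f} / 2

/-- A cycle copy as a cyclic sequence: `k` distinct vertices, cyclically consecutive adjacent. -/
def IsCycleSeq {V : Type*} (G : SimpleGraph V) (k : ℕ) (f : Fin k → V) : Prop :=
  Function.Injective f ∧ ∀ i : Fin k, G.Adj (f i) (f ⟨(i.val + 1) % k, Nat.mod_lt _ i.pos⟩)

/-- Number of copies of the cycle `C_k` in `G` (identified up to rotation and reflection). -/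
noncomputable def cycleCount {V : Type*} (G : SimpleGraph V) (k : ℕ) : ℕ :=
  Nat.card {f : Fin k → V // IsCycleSeq G k f} / (2 * k)

/-- The red graph of the coloring `χ(a,b)`: complete bipartite between the first `a`
vertices and the remaining `b` vertices. The blue graph is its complement. -/
def chiRed (a b : ℕ) : SimpleGraph (Fin (a + b)) :=
  SimpleGraph.fromRel (fun x y => (x.val < a) ≠ (y.val < a))

/-- Number of neighbors of `x` inside the set `Y`. -/
noncomputable def nbrCount {V : Type*} (G : SimpleGraph V) (x : V) (Y : Finset V) : ℕ :=
  Nat.card {y : V // y ∈ Y ∧ G.Adj x y}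

/-- `e(X,Y)`: number of pairs in `X × Y` that are edges. -/
noncomputable def eCnt {V : Type*} (G : SimpleGraph V) (X Y : Finset V) : ℕ :=
  Nat.card {p : V × V // p.1 ∈ X ∧ p.2 ∈ Y ∧ G.Adj p.1 p.2}

/-- Edge density `d(X,Y) = e(X,Y)/(|X||Y|)`. -/
noncomputable def dens {V : Type*} (G : SimpleGraph V) (X Y : Finset V) : ℝ :=
  (eCnt G X Y : ℝ) / ((X.card : ℝ) * (Y.card : ℝ))

/-- `(X,Y)` is an `ε`-regular pair in `G`. -/
def IsRegularPair {V : Type*} (G : SimpleGraph V) (X Y : Finset V) (ε : ℝ) : Prop :=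
  ∀ U, U ⊆ X → ∀ W, W ⊆ Y → ε * X.card ≤ (U.card : ℝ) → ε * Y.card ≤ (W.card : ℝ) →
    |dens G U W - dens G X Y| ≤ ε

/-- `W` is `(t,l)`-well-connected in `G`: any two distinct vertices of `W` are joined by
at least `t` internally vertex-disjoint paths of length at most `l`. -/
def WellConnected {V : Type*} (G : SimpleGraph V) (W : Set V) (t l : ℕ) : Prop :=
  ∀ u ∈ W, ∀ v ∈ W, u ≠ v →
    ∃ P : Fin t → G.Walk u v, Function.Injective P ∧
      (∀ i, (P i).IsPath ∧ (P i).length ≤ l) ∧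
      (∀ i j, i ≠ j → ∀ x, x ∈ (P i).support → x ∈ (P j).support → x = u ∨ x = v)

/-- Extremal coloring with parameter `α` (the red graph is `R`, blue is `Rᶜ`). -/
def IsExtremalColoring {V : Type*} [Fintype V] [DecidableEq V] (R : SimpleGraph V) (α : ℝ) : Prop :=
  ∃ A : Finset V,
    (2/3 - α) * (Fintype.card V : ℝ) ≤ (A.card : ℝ) ∧
    (1/3 - α) * (Fintype.card V : ℝ) ≤ ((Aᶜ).card : ℝ) ∧
    ((1 - α ≤ dens R A A ∧ 1 - α ≤ dens Rᶜ A Aᶜ) ∨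
     (1 - α ≤ dens Rᶜ A A ∧ 1 - α ≤ dens R A Aᶜ))

/-- A path of length `l` in `G[A,B]`: `l+1` distinct vertices alternating between the
parts `A` and `B`, with consecutive vertices adjacent in `G`. -/
def IsAltPath {Ω : Type*} (G : SimpleGraph Ω) (A B : Finset Ω) (l : ℕ) (f : Fin (l + 1) → Ω) : Prop :=
  Function.Injective f ∧
  (∀ i : Fin (l + 1), f i ∈ A ∨ f i ∈ B) ∧
  (∀ (i : Fin (l + 1)) (h : i.val + 1 < l + 1),
    G.Adj (f i) (f ⟨i.val + 1, h⟩) ∧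
    ((f i ∈ A ∧ f ⟨i.val + 1, h⟩ ∈ B) ∨ (f i ∈ B ∧ f ⟨i.val + 1, h⟩ ∈ A)))

/-- A path with `k` vertices alternating between `V` and `U`, starting in `V`. -/
def IsBipPathFromV {Ω : Type*} (G : SimpleGraph Ω) (U V : Finset Ω) (k : ℕ) (f : Fin k → Ω) : Prop :=
  Function.Injective f ∧
  (∀ i : Fin k, (i.val % 2 = 0 → f i ∈ V) ∧ (i.val % 2 = 1 → f i ∈ U)) ∧
  (∀ (i : Fin k) (h : i.val + 1 < k), G.Adj (f i) (f ⟨i.val + 1, h⟩))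


namespace ChiAux

def sB (a : ℕ) {n : ℕ} (v : Fin n) : Bool := decide (v.val < a)

lemma red_adj (a b : ℕ) (x y : Fin (a + b)) :
    (chiRed a b).Adj x y ↔ sB a x ≠ sB a y := by
  constructor
  · rintro ⟨hne, h | h⟩ <;> simp only [sB, ne_eq, decide_eq_decide] <;> tauto
  · intro h
    have hxy : x ≠ y := by rintro rfl; exact h rfl
    refine ⟨hxy, Or.inl fun he => ?_⟩
    simp only [sB, ne_eq, decide_eq_decide] at h
    exact h (iff_of_eq he)

lemma blue_adj (a b : ℕ) (x y : Fin (a + b)) :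
    (chiRed a b)ᶜ.Adj x y ↔ x ≠ y ∧ sB a x = sB a y := by
  rw [SimpleGraph.compl_adj, red_adj]
  simp only [ne_eq, not_not]

def Q (a : ℕ) {n k : ℕ} (c : Fin k → Bool) (f : Fin k → Fin n) : Prop :=
  Function.Injective f ∧ ∀ i, sB a (f i) = c i

def QEquiv (a bn k : ℕ) (c : Fin k → Bool) :
    {f : Fin k → Fin (a + bn) // Q a c f} ≃
      ({i : Fin k // c i = true} ↪ {v : Fin (a + bn) // v.val < a}) ×
      ({i : Fin k // c i = false} ↪ {v : Fin (a + bn) // ¬ v.val < a}) where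
  toFun f :=
    (⟨fun x => ⟨f.1 x.1, by have := f.2.2 x.1; rw [x.2] at this; simpa [sB] using this⟩,
      fun x y hxy => Subtype.ext (f.2.1 (congrArg Subtype.val hxy))⟩,
     ⟨fun x => ⟨f.1 x.1, by have := f.2.2 x.1; rw [x.2] at this; simpa [sB] using this⟩,
      fun x y hxy => Subtype.ext (f.2.1 (congrArg Subtype.val hxy))⟩)
  invFun gh :=
    ⟨fun i => if hc : c i = true then (gh.1 ⟨i, hc⟩).1
      else (gh.2 ⟨i, by simpa using hc⟩).1, by
      constructor
      · intro i j hij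
        by_cases hi : c i = true <;> by_cases hj : c j = true
        · simp only [dif_pos hi, dif_pos hj] at hij
          simpa using gh.1.injective (Subtype.ext hij)
        · simp only [dif_pos hi, dif_neg hj] at hij
          exact absurd (hij ▸ (gh.1 ⟨i, hi⟩).2) (gh.2 ⟨j, by simpa using hj⟩).2
        · simp only [dif_neg hi, dif_pos hj] at hij
          exact absurd (hij ▸ (gh.2 ⟨i, by simpa using hi⟩).2) (by simp [(gh.1 ⟨j, hj⟩).2])
        · simp only [dif_neg hi, dif_neg hj] at hij
          simpa using gh.2.injective (Subtype.ext hij)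
      · intro i
        by_cases hi : c i = true
        · simp only [dif_pos hi, hi]
          simp [sB, (gh.1 ⟨i, hi⟩).2]
        · simp only [dif_neg hi, (by simpa using hi : c i = false)]
          simp [sB, (gh.2 ⟨i, by simpa using hi⟩).2]⟩
  left_inv f := Subtype.ext (funext fun i => by
    by_cases hi : c i = true
    · simp only [dif_pos hi, Function.Embedding.coeFn_mk]; rfl
    · simp only [dif_neg hi, Function.Embedding.coeFn_mk]; rfl)
  right_inv gh := by
    ext x
    · simp only [Function.Embedding.coeFn_mk, dif_pos x.2]
      show ((if hc : c x.1 = true then (gh.1 ⟨x.1, hc⟩).1 else (gh.2 ⟨x.1, by simpa using hc⟩).1 : Fin (a + bn))).val = _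
      rw [dif_pos x.2]
    · have hx : ¬ c x.1 = true := by simp [x.2]
      simp only [Function.Embedding.coeFn_mk, dif_neg hx]
      show ((if hc : c x.1 = true then (gh.1 ⟨x.1, hc⟩).1 else (gh.2 ⟨x.1, by simpa using hc⟩).1 : Fin (a + bn))).val = _
      rw [dif_neg hx]

def ltEquiv (a bn : ℕ) : {v : Fin (a + bn) // v.val < a} ≃ Fin a where
  toFun v := ⟨v.1.1, v.2⟩
  invFun x := ⟨⟨x.1, lt_of_lt_of_le x.2 (Nat.le_add_right a bn)⟩, x.2⟩
  left_inv v := Subtype.ext (Fin.ext rfl)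
  right_inv x := rfl

def geEquiv (a bn : ℕ) : {v : Fin (a + bn) // ¬ v.val < a} ≃ Fin bn where
  toFun v := ⟨v.1.1 - a, by have h1 := v.1.2; have h2 := v.2; omega⟩
  invFun x := ⟨⟨a + x.1, by have := x.2; omega⟩, show ¬ a + x.1 < a by omega⟩
  left_inv v := Subtype.ext (Fin.ext (show a + (v.1.1 - a) = v.1.1 by
    have := v.2; omega))
  right_inv x := Fin.ext (show (a + x.1) - a = x.1 by omega)

lemma count_Q (a bn k : ℕ) (c : Fin k → Bool) :
    Nat.card {f : Fin k → Fin (a + bn) // Q a c f} =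
      a.descFactorial (Fintype.card {i : Fin k // c i = true}) *
      bn.descFactorial (Fintype.card {i : Fin k // c i = false}) := by
  rw [Nat.card_congr (QEquiv a bn k c), Nat.card_eq_fintype_card, Fintype.card_prod,
    Fintype.card_embedding_eq, Fintype.card_embedding_eq,
    Fintype.card_congr (ltEquiv a bn), Fintype.card_congr (geEquiv a bn),
    Fintype.card_fin, Fintype.card_fin]

lemma card_even {k : ℕ} (hk : k % 2 = 0) :
    Fintype.card {i : Fin k // i.val % 2 = 0} = k / 2 := by
  rw [Fintype.card_congr
    (⟨fun i => ⟨i.1.1 / 2, by have := i.1.2; have := i.2; omega⟩,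
      fun j => ⟨⟨2 * j.1, by have := j.2; omega⟩, show (2 * j.1) % 2 = 0 by omega⟩,
      fun i => Subtype.ext (Fin.ext (show 2 * (i.1.1 / 2) = i.1.1 by
        have := i.2; omega)),
      fun j => Fin.ext (show (2 * j.1) / 2 = j.1 by omega)⟩ :
      {i : Fin k // i.val % 2 = 0} ≃ Fin (k / 2)), Fintype.card_fin]

lemma card_odd {k : ℕ} (hk : k % 2 = 0) :
    Fintype.card {i : Fin k // ¬ i.val % 2 = 0} = k / 2 := by
  rw [Fintype.card_congr
    (⟨fun i => ⟨i.1.1 / 2, by have := i.1.2; have := i.2; omega⟩,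
      fun j => ⟨⟨2 * j.1 + 1, by have := j.2; omega⟩, show ¬ (2 * j.1 + 1) % 2 = 0 by omega⟩,
      fun i => Subtype.ext (Fin.ext (show 2 * (i.1.1 / 2) + 1 = i.1.1 by
        have := i.2; omega)),
      fun j => Fin.ext (show (2 * j.1 + 1) / 2 = j.1 by omega)⟩ :
      {i : Fin k // ¬ i.val % 2 = 0} ≃ Fin (k / 2)), Fintype.card_fin]

def cpat {k : ℕ} (b : Bool) : Fin k → Bool := fun i => if i.val % 2 = 0 then b else !b

lemma bool_ne_iff {x y : Bool} (h : x ≠ y) : x = !y := by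
  cases x <;> cases y <;> simp_all

lemma cpat_succ {k : ℕ} (b : Bool) (i j : Fin k) (h : j.val = i.val + 1) :
    cpat b j = !(cpat b i) := by
  simp only [cpat]
  by_cases hp : i.val % 2 = 0
  · rw [if_pos hp, if_neg (by omega)]
  · rw [if_neg hp, if_pos (by omega), Bool.not_not]

lemma cpat_ne {k : ℕ} (b : Bool) (i j : Fin k) (h : j.val = i.val + 1) :
    cpat b i ≠ cpat b j := by
  rw [cpat_succ b i j h]
  cases cpat b i <;> simp

lemma red_iff {a bn k : ℕ} (hk : 0 < k) (f : Fin k → Fin (a + bn)) :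
    IsPathSeq (chiRed a bn) k f ↔ Q a (cpat true) f ∨ Q a (cpat false) f := by
  constructor
  · rintro ⟨hinj, hadj⟩
    have key : ∀ m (hm : m < k),
        sB a (f ⟨m, hm⟩) = cpat (sB a (f ⟨0, hk⟩)) ⟨m, hm⟩ := by
      intro m
      induction m with
      | zero => intro hm; rfl
      | succ m ih =>
        intro hm
        have hm' : m < k := by omega
        have h1 := (red_adj a bn _ _).1 (hadj ⟨m, hm'⟩ (by simpa using hm))
        rw [ih hm'] at h1
        rw [bool_ne_iff (Ne.symm h1), cpat_succ _ ⟨m, hm'⟩ ⟨m + 1, hm⟩ rfl]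
    have hall : ∀ i, sB a (f i) = cpat (sB a (f ⟨0, hk⟩)) i := fun i => key i.1 i.2
    cases hbv : sB a (f ⟨0, hk⟩)
    · exact Or.inr ⟨hinj, fun i => by have := hall i; rwa [hbv] at this⟩
    · exact Or.inl ⟨hinj, fun i => by have := hall i; rwa [hbv] at this⟩
  · rintro (⟨hinj, hc⟩ | ⟨hinj, hc⟩) <;> refine ⟨hinj, fun i h => ?_⟩ <;>
      rw [red_adj, hc i, hc ⟨i.1 + 1, h⟩]
    · exact cpat_ne true i ⟨i.1 + 1, h⟩ rfl
    · exact cpat_ne false i ⟨i.1 + 1, h⟩ rfl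

lemma blue_iff {a bn k : ℕ} (hk : 0 < k) (f : Fin k → Fin (a + bn)) :
    IsPathSeq (chiRed a bn)ᶜ k f ↔
      Q a (fun _ => true) f ∨ Q a (fun _ => false) f := by
  constructor
  · rintro ⟨hinj, hadj⟩
    have key : ∀ m (hm : m < k), sB a (f ⟨m, hm⟩) = sB a (f ⟨0, hk⟩) := by
      intro m
      induction m with
      | zero => intro hm; rfl
      | succ m ih =>
        intro hm
        have hm' : m < k := by omega
        have h1 := (blue_adj a bn _ _).1 (hadj ⟨m, hm'⟩ (by simpa using hm))
        rw [← h1.2, ih hm']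
    have hall : ∀ i, sB a (f i) = sB a (f ⟨0, hk⟩) := fun i => key i.1 i.2
    cases hbv : sB a (f ⟨0, hk⟩)
    · exact Or.inr ⟨hinj, fun i => by rw [hall i, hbv]⟩
    · exact Or.inl ⟨hinj, fun i => by rw [hall i, hbv]⟩
  · rintro (⟨hinj, hc⟩ | ⟨hinj, hc⟩) <;> refine ⟨hinj, fun i h => ?_⟩ <;>
      rw [blue_adj] <;>
      exact ⟨fun he => by simpa using congrArg Fin.val (hinj he),
        by rw [hc i, hc ⟨i.1 + 1, h⟩]⟩

lemma card_or {α : Type*} [Finite α] (p q : α → Prop) (h : ∀ x, p x → q x → False) :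
    Nat.card {x // p x ∨ q x} = Nat.card {x // p x} + Nat.card {x // q x} := by
  classical
  rw [Nat.card_congr (subtypeOrEquiv p q (by
    rw [Pi.disjoint_iff]
    intro x
    rw [Prop.disjoint_iff]
    exact fun hx => h x hx.1 hx.2)), Nat.card_sum]

end ChiAux

/-- For even `k ≥ 4`, each of the colorings `χ(k, k/2-1)` and `χ(k-1, k/2)`
of the complete graph on `k - 1 + k/2` vertices contains exactly `k!/2` monochromatic
copies of the path `P_k`. -/
theorem chi_path_count_even (k : ℕ) (hk : 4 ≤ k) (hke : Even k) :
    pathCount (chiRed k (k / 2 - 1)) k + pathCount (chiRed k (k / 2 - 1))ᶜ k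
      = k.factorial / 2 ∧
    pathCount (chiRed (k - 1) (k / 2)) k + pathCount (chiRed (k - 1) (k / 2))ᶜ k
      = k.factorial / 2 := by
    classical
  obtain ⟨m, hm⟩ := hke
  have hm2 : 2 ≤ m := by omega
  have hk2 : k % 2 = 0 := by omega
  have hkpos : 0 < k := by omega
  have main : ∀ a bn : ℕ,
      Nat.card {f : Fin k → Fin (a + bn) // IsPathSeq (chiRed a bn) k f} =
        a.descFactorial (k / 2) * bn.descFactorial (k / 2) +
        a.descFactorial (k / 2) * bn.descFactorial (k / 2) ∧
      Nat.card {f : Fin k → Fin (a + bn) // IsPathSeq (chiRed a bn)ᶜ k f} =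
        a.descFactorial k + bn.descFactorial k := by
    intro a bn
    have ct1 : Fintype.card {i : Fin k // ChiAux.cpat true i = true} = k / 2 := by
      rw [Fintype.card_congr (Equiv.subtypeEquivRight
        (q := fun i : Fin k => i.val % 2 = 0)
        (fun i => by simp [ChiAux.cpat]))]
      exact ChiAux.card_even hk2
    have ct2 : Fintype.card {i : Fin k // ChiAux.cpat true i = false} = k / 2 := by
      rw [Fintype.card_congr (Equiv.subtypeEquivRight
        (q := fun i : Fin k => ¬ i.val % 2 = 0)
        (fun i => by simp [ChiAux.cpat]))]
      exact ChiAux.card_odd hk2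
    have cf1 : Fintype.card {i : Fin k // ChiAux.cpat false i = true} = k / 2 := by
      rw [Fintype.card_congr (Equiv.subtypeEquivRight
        (q := fun i : Fin k => ¬ i.val % 2 = 0)
        (fun i => by simp [ChiAux.cpat]))]
      exact ChiAux.card_odd hk2
    have cf2 : Fintype.card {i : Fin k // ChiAux.cpat false i = false} = k / 2 := by
      rw [Fintype.card_congr (Equiv.subtypeEquivRight
        (q := fun i : Fin k => i.val % 2 = 0)
        (fun i => by simp [ChiAux.cpat]))]
      exact ChiAux.card_even hk2
    constructor
    · rw [Nat.card_congr (Equiv.subtypeEquivRight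
        (fun f => ChiAux.red_iff hkpos f)),
        ChiAux.card_or _ _ (by
          rintro f ⟨_, h1⟩ ⟨_, h2⟩
          have := ((h1 ⟨0, hkpos⟩).symm.trans (h2 ⟨0, hkpos⟩))
          simp [ChiAux.cpat] at this),
        ChiAux.count_Q, ChiAux.count_Q, ct1, ct2, cf1, cf2]
    · rw [Nat.card_congr (Equiv.subtypeEquivRight
        (fun f => ChiAux.blue_iff hkpos f)),
        ChiAux.card_or _ _ (by
          rintro f ⟨_, h1⟩ ⟨_, h2⟩
          have := ((h1 ⟨0, hkpos⟩).symm.trans (h2 ⟨0, hkpos⟩))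
          simp at this),
        ChiAux.count_Q, ChiAux.count_Q]
      have c1 : Fintype.card {i : Fin k // (true : Bool) = true} = k := by
        rw [Fintype.card_congr (Equiv.subtypeUnivEquiv (fun _ => rfl)), Fintype.card_fin]
      have c2 : Fintype.card {i : Fin k // (true : Bool) = false} = 0 := by
        have : IsEmpty {i : Fin k // (true : Bool) = false} := ⟨fun x => by simpa using x.2⟩
        exact Fintype.card_eq_zero
      have c3 : Fintype.card {i : Fin k // (false : Bool) = true} = 0 := by
        have : IsEmpty {i : Fin k // (false : Bool) = true} := ⟨fun x => by simpa using x.2⟩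
        exact Fintype.card_eq_zero
      have c4 : Fintype.card {i : Fin k // (false : Bool) = false} = k := by
        rw [Fintype.card_congr (Equiv.subtypeUnivEquiv (fun _ => rfl)), Fintype.card_fin]
      rw [c1, c2, c3, c4]
      simp [Nat.descFactorial_zero]
  constructor
  · have h := main k (k / 2 - 1)
    have hred : Nat.card {f : Fin k → Fin (k + (k / 2 - 1)) //
        IsPathSeq (chiRed k (k / 2 - 1)) k f} = 0 := by
      rw [h.1, Nat.descFactorial_of_lt (by omega : k / 2 - 1 < k / 2)]
      ring
    have hblue : Nat.card {f : Fin k → Fin (k + (k / 2 - 1)) //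
        IsPathSeq (chiRed k (k / 2 - 1))ᶜ k f} = k.factorial := by
      rw [h.2, Nat.descFactorial_self, Nat.descFactorial_of_lt (by omega : k / 2 - 1 < k)]
      omega
    simp only [pathCount, hred, hblue]
    simp
  · have h := main (k - 1) (k / 2)
    have hred : Nat.card {f : Fin k → Fin ((k - 1) + k / 2) //
        IsPathSeq (chiRed (k - 1) (k / 2)) k f} = k.factorial := by
      rw [h.1, Nat.descFactorial_self]
      have hfac : (k / 2 - 1).factorial * (k - 1).descFactorial (k / 2)
          = (k - 1).factorial := by
        have := Nat.factorial_mul_descFactorial (show k / 2 ≤ k - 1 by omega)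
        rwa [(by omega : k - 1 - k / 2 = k / 2 - 1)] at this
      have hstep : (k / 2).factorial = (k / 2) * (k / 2 - 1).factorial :=
        (Nat.mul_factorial_pred (by omega)).symm
      rw [hstep]
      calc (k - 1).descFactorial (k / 2) * (k / 2 * (k / 2 - 1).factorial)
            + (k - 1).descFactorial (k / 2) * (k / 2 * (k / 2 - 1).factorial)
          = (2 * (k / 2)) * ((k / 2 - 1).factorial * (k - 1).descFactorial (k / 2)) := by
            ring
        _ = (2 * (k / 2)) * (k - 1).factorial := by rw [hfac]
        _ = k * (k - 1).factorial := by congr 1; omega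
        _ = k.factorial := Nat.mul_factorial_pred hkpos.ne'
    have hblue : Nat.card {f : Fin k → Fin ((k - 1) + k / 2) //
        IsPathSeq (chiRed (k - 1) (k / 2))ᶜ k f} = 0 := by
      rw [h.2, Nat.descFactorial_of_lt (by omega : k - 1 < k),
        Nat.descFactorial_of_lt (by omega : k / 2 < k)]
    simp only [pathCount, hred, hblue]
    simp
end

section
/- Let k ≥ 6 be even. Consider the two-coloring of the complete graph on 3k/2 − 1 vertices with vertex set A ∪ B, |A| = k, |B| = k/2 − 1, in which all edges inside B are blue, all edges between A and B are red, one fixed edge e inside A is red, and all other edges inside A are blue. Then this coloring contains no monochromatic red copy of the cycle C_k, and the total number of monochromatic copies of C_k is exactly ((k−3)/2)·(k−2)!, all of them blue. -/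
open Finset

open Function

-- successor index equals group addition
lemma succ_idx_eq {k : ℕ} [NeZero k] (i : Fin k) :
    (⟨(i.val + 1) % k, Nat.mod_lt _ i.pos⟩ : Fin k) = i + 1 := by
  apply Fin.ext
  simp [Fin.add_def, Fin.val_one', Nat.add_mod, Nat.mod_mod_of_dvd]

set_option maxHeartbeats 1000000 in
lemma no_red_cycle (k : ℕ) (hk : 6 ≤ k) (hke : Even k)
    (u v : Fin (k + (k / 2 - 1))) (hu : u.val < k) (hv : v.val < k) :
    ¬ ∃ f : Fin k → Fin (k + (k / 2 - 1)),
        IsCycleSeq (SimpleGraph.fromRel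
          (fun x y => ((x.val < k) ≠ (y.val < k)) ∨ (x = u ∧ y = v))) k f := by
  haveI : NeZero k := ⟨by omega⟩
  have hk2 : k % 2 = 0 := Nat.even_iff.mp hke
  rintro ⟨f, finj, fadj⟩
  have adj : ∀ i : Fin k, f i ≠ f (i + 1) ∧
      ((((f i).val < k) ≠ (((f (i+1)).val < k))) ∨ (f i = u ∧ f (i+1) = v) ∨
        (((f (i+1)).val < k) ≠ ((f i).val < k)) ∨ (f (i+1) = u ∧ f i = v)) := by
    intro i
    have := fadj i
    rw [succ_idx_eq, SimpleGraph.fromRel_adj] at this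
    tauto
  classical
  set P : Fin k → Prop := fun i => k ≤ (f i).val with hP
  -- m = number of positions in B
  set m := (univ.filter (fun i => P i)).card with hm
  have hBcard : Fintype.card {x : Fin (k + (k / 2 - 1)) // k ≤ x.val} = k / 2 - 1 := by
    have e : {x : Fin (k + (k / 2 - 1)) // k ≤ x.val} ≃ Fin (k / 2 - 1) :=
      { toFun := fun x => ⟨x.1.val - k, by have := x.1.isLt; have := x.2; omega⟩
        invFun := fun j => ⟨⟨k + j.val, by have := j.isLt; omega⟩, by simp⟩
        left_inv := by intro x; have := x.2; ext; simp; omega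
        right_inv := by intro j; ext; simp }
    simp [Fintype.card_congr e]
  have hmle : m ≤ k / 2 - 1 := by
    have : m ≤ (univ.filter (fun x : Fin (k + (k / 2 - 1)) => k ≤ x.val)).card := by
      apply Finset.card_le_card_of_injOn f
      · intro i hi; simp only [mem_coe, mem_filter, mem_univ, true_and] at hi ⊢; exact hi
      · exact finj.injOn
    rwa [← Fintype.card_subtype, hBcard] at this
  -- noncrossing positions: at most one
  have noncross_uv : ∀ i : Fin k, (P i ↔ P (i+1)) →
      (f i = u ∧ f (i+1) = v) ∨ (f (i+1) = u ∧ f i = v) := by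
    intro i hiff
    obtain ⟨hne, hrel⟩ := adj i
    by_cases h1 : P i
    · have h2 : P (i+1) := hiff.mp h1
      simp only [hP] at h1 h2
      exfalso
      rcases hrel with h | ⟨hh1, hh2⟩ | h | ⟨hh1, hh2⟩
      · exact h (by simp only [eq_iff_iff]; constructor <;> intro <;> omega)
      · rw [hh1] at h1; omega
      · exact h (by simp only [eq_iff_iff]; constructor <;> intro <;> omega)
      · rw [hh1] at h2; omega
    · have h2 : ¬ P (i+1) := fun hh => h1 (hiff.mpr hh)
      simp only [hP, not_le] at h1 h2
      rcases hrel with h | ⟨hh1, hh2⟩ | h | ⟨hh1, hh2⟩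
      · exact absurd (by simp only [eq_iff_iff]; constructor <;> intro <;> omega : ((f i).val < k) = ((f (i+1)).val < k)) h
      · exact Or.inl ⟨hh1, hh2⟩
      · exact absurd (by simp only [eq_iff_iff]; constructor <;> intro <;> omega : ((f (i+1)).val < k) = ((f i).val < k)) h
      · exact Or.inr ⟨hh1, hh2⟩
  have two_ne : (1 : Fin k) + 1 ≠ 0 := by
    intro h
    have := congrArg Fin.val h
    simp [Fin.add_def, Fin.val_one', Nat.mod_eq_of_lt (show (1:ℕ) < k by omega),
      Nat.mod_eq_of_lt (show (2:ℕ) < k by omega)] at this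
  have noncross_unique : ∀ i j : Fin k, (P i ↔ P (i+1)) → (P j ↔ P (j+1)) → i = j := by
    intro i j hi hj
    rcases noncross_uv i hi with ⟨h1, h2⟩ | ⟨h1, h2⟩ <;>
      rcases noncross_uv j hj with ⟨h3, h4⟩ | ⟨h3, h4⟩
    · exact finj (h1.trans h3.symm)
    · -- f i = u, f(i+1) = v, f(j+1) = u, f j = v
      exfalso
      have hij : i = j + 1 := finj (h1.trans h3.symm)
      have hji : j = i + 1 := finj (h4.trans h2.symm)
      rw [hji] at hij
      have : (0 : Fin k) = 1 + 1 := by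
        have := congrArg (· - i) hij
        simpa [add_assoc, add_sub_cancel_left] using this
      exact two_ne this.symm
    · exfalso
      have hij : i = j + 1 := finj (h2.trans h4.symm)
      have hji : j = i + 1 := finj (h3.trans h1.symm)
      rw [hji] at hij
      have : (0 : Fin k) = 1 + 1 := by
        have := congrArg (· - i) hij
        simpa [add_assoc, add_sub_cancel_left] using this
      exact two_ne this.symm
    · exact add_right_cancel (finj (h1.trans h3.symm))
  -- crossing count
  have hnc : (univ.filter (fun i : Fin k => (P i ↔ P (i+1)))).card ≤ 1 := by
    apply Finset.card_le_one.mpr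
    intro i hi j hj
    simp only [mem_filter, mem_univ, true_and] at hi hj
    exact noncross_unique i j hi hj
  have hsplit := Finset.card_filter_add_card_filter_not
    (s := (univ : Finset (Fin k))) (p := fun i : Fin k => (P i ↔ P (i+1)))
  rw [Finset.card_univ, Fintype.card_fin] at hsplit
  have hcross : k - 1 ≤ (univ.filter (fun i : Fin k => ¬ (P i ↔ P (i+1)))).card := by omega
  -- sum bound
  have hsum : ∑ i : Fin k, ((if P i then 1 else 0) + (if P (i+1) then 1 else 0)) = 2 * m := by
    rw [Finset.sum_add_distrib]
    have h2 : ∑ i : Fin k, (if P (i+1) then (1:ℕ) else 0) = ∑ i : Fin k, (if P i then 1 else 0) :=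
      Fintype.sum_equiv (Equiv.addRight (1 : Fin k)) _ _ (fun i => rfl)
    have hb : ∑ i : Fin k, (if P i then (1:ℕ) else 0) = m := by
      rw [Finset.sum_boole, Nat.cast_id, hm]
    rw [h2, hb]; omega
  have hle : (univ.filter (fun i : Fin k => ¬ (P i ↔ P (i+1)))).card
      ≤ ∑ i : Fin k, ((if P i then 1 else 0) + (if P (i+1) then 1 else 0)) := by
    rw [Finset.card_eq_sum_ones]
    calc ∑ _i ∈ univ.filter (fun i : Fin k => ¬ (P i ↔ P (i+1))), 1
        ≤ ∑ i ∈ univ.filter (fun i : Fin k => ¬ (P i ↔ P (i+1))),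
            ((if P i then 1 else 0) + (if P (i+1) then 1 else 0)) := by
          apply Finset.sum_le_sum
          intro i hi
          simp only [mem_filter, mem_univ, true_and] at hi
          by_cases h1 : P i <;> by_cases h2 : P (i+1) <;> simp_all <;>
            exact absurd ⟨fun h => by omega, fun h => by omega⟩ hi
      _ ≤ _ := Finset.sum_le_sum_of_subset (Finset.filter_subset _ _)
  omega


private def PhiH {k : ℕ} [NeZero k] (a b : Fin k)
    (e : {j : Fin k // j ≠ 0 ∧ j ≠ 1} ↪ {x : Fin k // x ≠ a ∧ x ≠ b}) (j : Fin k) : Fin k :=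
  if hj0 : j = 0 then a else if hj1 : j = 1 then b else (e ⟨j, hj0, hj1⟩).1

private lemma PhiH_zero {k : ℕ} [NeZero k] (a b : Fin k) (e) : PhiH a b e 0 = a := by
  simp [PhiH]

private lemma PhiH_one {k : ℕ} [NeZero k] (h01 : (0 : Fin k) ≠ 1) (a b : Fin k) (e) :
    PhiH a b e 1 = b := by
  rw [PhiH, dif_neg (Ne.symm h01), dif_pos rfl]

private lemma PhiH_other {k : ℕ} [NeZero k] (a b : Fin k) (e) (j : Fin k)
    (h0 : j ≠ 0) (h1 : j ≠ 1) : PhiH a b e j = (e ⟨j, h0, h1⟩).1 := by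
  simp [PhiH, h0, h1]

lemma cardH (k : ℕ) [NeZero k] (hk : 6 ≤ k) (a b : Fin k) (hab : a ≠ b) :
    Nat.card {h : Fin k → Fin k // Injective h ∧ h 0 = a ∧ h 1 = b} = (k - 2).factorial := by
  have h01 : (0 : Fin k) ≠ 1 := by
    intro h; have := congrArg Fin.val h
    simp [Fin.val_one', Nat.mod_eq_of_lt (show (1:ℕ) < k by omega)] at this
  have hinj : ∀ e, Injective (PhiH a b e) := by
    intro e x y hxy
    by_cases hx0 : x = 0
    · subst hx0
      by_cases hy0 : y = 0
      · exact hy0.symm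
      by_cases hy1 : y = 1
      · subst hy1; rw [PhiH_zero, PhiH_one h01] at hxy; exact absurd hxy hab
      · rw [PhiH_zero, PhiH_other a b e y hy0 hy1] at hxy
        exact absurd hxy.symm (e ⟨y, hy0, hy1⟩).2.1
    by_cases hx1 : x = 1
    · subst hx1
      by_cases hy0 : y = 0
      · subst hy0; rw [PhiH_one h01, PhiH_zero] at hxy; exact absurd hxy.symm hab
      by_cases hy1 : y = 1
      · exact hy1.symm
      · rw [PhiH_one h01, PhiH_other a b e y hy0 hy1] at hxy
        exact absurd hxy.symm (e ⟨y, hy0, hy1⟩).2.2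
    · by_cases hy0 : y = 0
      · subst hy0; rw [PhiH_other a b e x hx0 hx1, PhiH_zero] at hxy
        exact absurd hxy (e ⟨x, hx0, hx1⟩).2.1
      by_cases hy1 : y = 1
      · subst hy1; rw [PhiH_other a b e x hx0 hx1, PhiH_one h01] at hxy
        exact absurd hxy (e ⟨x, hx0, hx1⟩).2.2
      · rw [PhiH_other a b e x hx0 hx1, PhiH_other a b e y hy0 hy1] at hxy
        exact congrArg Subtype.val (e.injective (Subtype.ext hxy))
  have E : {h : Fin k → Fin k // Injective h ∧ h 0 = a ∧ h 1 = b}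
      ≃ ({j : Fin k // j ≠ 0 ∧ j ≠ 1} ↪ {x : Fin k // x ≠ a ∧ x ≠ b}) :=
    { toFun := fun h =>
        ⟨fun j => ⟨h.1 j.1, fun he => j.2.1 (h.2.1 (he.trans h.2.2.1.symm)),
            fun he => j.2.2 (h.2.1 (he.trans h.2.2.2.symm))⟩,
          fun j j' hh => Subtype.ext (h.2.1 (congrArg Subtype.val hh))⟩
      invFun := fun e => ⟨PhiH a b e, hinj e, PhiH_zero a b e, PhiH_one h01 a b e⟩
      left_inv := by
        intro h
        apply Subtype.ext
        funext j
        show PhiH a b _ j = h.1 j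
        by_cases hj0 : j = 0
        · subst hj0; rw [PhiH_zero]; exact h.2.2.1.symm
        by_cases hj1 : j = 1
        · subst hj1; rw [PhiH_one h01]; exact h.2.2.2.symm
        · rw [PhiH_other a b _ j hj0 hj1]; rfl
      right_inv := by
        intro e
        apply Function.Embedding.ext
        rintro ⟨j, hj⟩
        exact Subtype.ext (PhiH_other a b e j hj.1 hj.2) }
  rw [Nat.card_congr E, Nat.card_eq_fintype_card, Fintype.card_embedding_eq]
  have hD : Fintype.card {j : Fin k // j ≠ 0 ∧ j ≠ 1} = k - 2 := by
    have e : {j : Fin k // j ≠ 0 ∧ j ≠ 1} ≃ Fin (k - 2) :=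
      { toFun := fun j => ⟨j.1.val - 2, by
          have h1 := j.1.isLt
          have h2 : j.1.val ≠ 0 := fun h => j.2.1 (Fin.ext (by simpa using h))
          have h3 : j.1.val ≠ 1 := fun h => j.2.2 (Fin.ext (by
            simpa [Fin.val_one', Nat.mod_eq_of_lt (show (1:ℕ) < k by omega)] using h))
          omega⟩
        invFun := fun m => ⟨⟨m.val + 2, by have := m.isLt; omega⟩, by
          constructor <;> intro h <;> have := congrArg Fin.val h <;>
            simp [Fin.val_one', Nat.mod_eq_of_lt (show (1:ℕ) < k by omega)] at this⟩
        left_inv := by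
          intro j
          have h2 : j.1.val ≠ 0 := fun h => j.2.1 (Fin.ext (by simpa using h))
          have h3 : j.1.val ≠ 1 := fun h => j.2.2 (Fin.ext (by
            simpa [Fin.val_one', Nat.mod_eq_of_lt (show (1:ℕ) < k by omega)] using h))
          apply Subtype.ext; apply Fin.ext; simp; omega
        right_inv := by intro m; apply Fin.ext; simp }
    rw [Fintype.card_congr e, Fintype.card_fin]
  have hC : Fintype.card {x : Fin k // x ≠ a ∧ x ≠ b} = k - 2 := by
    have e : {x : Fin k // x ≠ a ∧ x ≠ b} ≃ {x : Fin k // ¬ (x = a ∨ x = b)} :=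
      Equiv.subtypeEquivRight (by tauto)
    rw [Fintype.card_congr e, Fintype.card_subtype_compl]
    have h2 : Fintype.card {x : Fin k // x = a ∨ x = b} = 2 := by
      rw [Fintype.card_subtype]
      have : (univ.filter (fun x : Fin k => x = a ∨ x = b)) = {a, b} := by
        ext x; simp
      rw [this, Finset.card_insert_of_notMem (by simpa using hab), Finset.card_singleton]
    rw [h2, Fintype.card_fin]
  rw [hD, hC, Nat.descFactorial_self]


lemma cardT (k : ℕ) : Nat.card {g : Fin k → Fin k // Injective g} = k.factorial := by
  rw [Nat.card_congr (Equiv.subtypeInjectiveEquivEmbedding (Fin k) (Fin k)),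
    Nat.card_eq_fintype_card, Fintype.card_embedding_eq, Fintype.card_fin,
    Nat.descFactorial_self]

lemma bad_unique {k : ℕ} [NeZero k] (hk : 6 ≤ k) (a b : Fin k) (hab : a ≠ b)
    (g : Fin k → Fin k) (ginj : Injective g) :
    ∀ i i' : Fin k, g i = a → g (i+1) = b → g i' = b → g (i'+1) = a → False := by
  intro i i' h1 h2 h3 h4
  have e1 : i' = i + 1 := ginj (h3.trans h2.symm)
  have e2 : i = i' + 1 := ginj (h1.trans h4.symm)
  rw [e1] at e2
  have h0 : (0 : Fin k) = 1 + 1 := by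
    simpa [add_assoc, sub_self, add_sub_cancel_left] using congrArg (· - i) e2
  have := congrArg Fin.val h0
  simp [Fin.add_def, Fin.val_one', Nat.mod_eq_of_lt (show (1:ℕ) < k by omega),
    Nat.mod_eq_of_lt (show (2:ℕ) < k by omega)] at this

lemma cardBad (k : ℕ) [NeZero k] (hk : 6 ≤ k) (a b : Fin k) (hab : a ≠ b) :
    Nat.card {g : Fin k → Fin k // Injective g ∧
      ∃ i : Fin k, (g i = a ∧ g (i+1) = b) ∨ (g i = b ∧ g (i+1) = a)}
      = 2 * k * (k - 2).factorial := by
  set sfun : Bool → Fin k → Fin k := fun d x => cond d (Equiv.swap a b x) x with hsfun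
  have sinj : ∀ d, Injective (sfun d) := by
    intro d x y hxy
    cases d
    · exact hxy
    · exact (Equiv.swap a b).injective hxy
  have s_s : ∀ d x, sfun d (sfun d x) = x := by
    intro d x; cases d
    · rfl
    · simp [hsfun]
  set Bad := {g : Fin k → Fin k // Injective g ∧
      ∃ i : Fin k, (g i = a ∧ g (i+1) = b) ∨ (g i = b ∧ g (i+1) = a)} with hBad
  set H := {h : Fin k → Fin k // Injective h ∧ h 0 = a ∧ h 1 = b} with hH
  have Φprop : ∀ (p : Fin k × Bool × H),
      Injective (fun j => sfun p.2.1 (p.2.2.1 (j - p.1))) ∧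
      ∃ i : Fin k, ((fun j => sfun p.2.1 (p.2.2.1 (j - p.1))) i = a ∧
          (fun j => sfun p.2.1 (p.2.2.1 (j - p.1))) (i+1) = b) ∨
        ((fun j => sfun p.2.1 (p.2.2.1 (j - p.1))) i = b ∧
          (fun j => sfun p.2.1 (p.2.2.1 (j - p.1))) (i+1) = a) := by
    rintro ⟨i, d, h⟩
    constructor
    · intro x y hxy
      have := h.2.1 (sinj _ hxy)
      exact sub_left_inj.mp this
    · refine ⟨i, ?_⟩
      have e0 : sfun d (h.1 (i - i)) = sfun d a := by rw [sub_self, h.2.2.1]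
      have e1 : sfun d (h.1 (i + 1 - i)) = sfun d b := by rw [add_sub_cancel_left, h.2.2.2]
      cases d
      · exact Or.inl ⟨e0, e1⟩
      · refine Or.inr ⟨?_, ?_⟩
        · simpa [hsfun] using e0
        · simpa [hsfun] using e1
  set Φ : Fin k × Bool × H → Bad := fun p =>
    ⟨fun j => sfun p.2.1 (p.2.2.1 (j - p.1)), Φprop p⟩ with hΦ
  have Φbij : Function.Bijective Φ := by
    constructor
    · rintro ⟨i, d, h⟩ ⟨i', d', h'⟩ heq
      have happ : ∀ j, sfun d (h.1 (j - i)) = sfun d' (h'.1 (j - i')) :=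
        fun j => congrFun (congrArg Subtype.val heq) j
      have ginj : Injective (fun j => sfun d (h.1 (j - i))) := (Φprop ⟨i, d, h⟩).1
      have gi : sfun d (h.1 (i - i)) = sfun d a := by rw [sub_self, h.2.2.1]
      have gi1 : sfun d (h.1 (i + 1 - i)) = sfun d b := by rw [add_sub_cancel_left, h.2.2.2]
      have gi' : sfun d (h.1 (i' - i)) = sfun d' a := by
        rw [happ i', sub_self, h'.2.2.1]
      have gi'1 : sfun d (h.1 (i' + 1 - i)) = sfun d' b := by
        rw [happ (i' + 1), add_sub_cancel_left, h'.2.2.2]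
      have hval : ∀ j, h.1 j = sfun d (sfun d' (h'.1 (j + i - i'))) := by
        intro j
        have := happ (j + i)
        rw [add_sub_cancel_right] at this
        rw [← s_s d (h.1 j), this]
      cases d <;> cases d'
      · -- false false
        have hi : i = i' := ginj (show sfun false (h.1 (i - i)) = sfun false (h.1 (i' - i)) by
          rw [gi, gi'])
        have hh : h = h' := by
          apply Subtype.ext; funext j
          have := hval j
          rw [← hi, add_sub_cancel_right] at this
          simpa [hsfun] using this
        rw [hi, hh]
      · exfalso
        refine bad_unique hk a b hab _ ginj i i' ?_ ?_ ?_ ?_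
        · simpa [hsfun] using gi
        · simpa [hsfun] using gi1
        · simpa [hsfun] using gi'
        · simpa [hsfun] using gi'1
      · exfalso
        refine bad_unique hk a b hab _ ginj i' i ?_ ?_ ?_ ?_
        · simpa [hsfun] using gi'
        · simpa [hsfun] using gi'1
        · simpa [hsfun] using gi
        · simpa [hsfun] using gi1
      · -- true true
        have hi : i = i' := ginj (show sfun true (h.1 (i - i)) = sfun true (h.1 (i' - i)) by
          rw [gi, gi'])
        have hh : h = h' := by
          apply Subtype.ext; funext j
          have := hval j
          rw [← hi, add_sub_cancel_right] at this
          simpa [hsfun, s_s] using this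
        rw [hi, hh]
    · rintro ⟨g, ginj, i, hw⟩
      rcases hw with ⟨h1, h2⟩ | ⟨h1, h2⟩
      · refine ⟨⟨i, false, ⟨fun j => g (j + i), ?_, ?_, ?_⟩⟩, ?_⟩
        · intro x y hxy; exact add_right_cancel (ginj hxy)
        · show g (0 + i) = a; rw [zero_add]; exact h1
        · show g (1 + i) = b; rw [add_comm]; exact h2
        · apply Subtype.ext; funext j
          show sfun false (g (j - i + i)) = g j
          rw [sub_add_cancel]; rfl
      · refine ⟨⟨i, true, ⟨fun j => Equiv.swap a b (g (j + i)), ?_, ?_, ?_⟩⟩, ?_⟩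
        · intro x y hxy; exact add_right_cancel (ginj ((Equiv.swap a b).injective hxy))
        · show Equiv.swap a b (g (0 + i)) = a; rw [zero_add, h1, Equiv.swap_apply_right]
        · show Equiv.swap a b (g (1 + i)) = b; rw [add_comm, h2, Equiv.swap_apply_left]
        · apply Subtype.ext; funext j
          show sfun true (Equiv.swap a b (g (j - i + i))) = g j
          simp [hsfun, sub_add_cancel]
  have := Nat.card_congr (Equiv.ofBijective Φ Φbij).symm
  rw [this, Nat.card_prod, Nat.card_prod, Nat.card_eq_fintype_card (α := Fin k),
    Fintype.card_fin, Nat.card_eq_fintype_card (α := Bool), Fintype.card_bool,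
    hH, cardH k hk a b hab]
  ring



lemma cardGood (k : ℕ) [NeZero k] (hk : 6 ≤ k) (a b : Fin k) (hab : a ≠ b) :
    Nat.card {g : Fin k → Fin k // Injective g ∧
      ∀ i : Fin k, ¬((g i = a ∧ g (i+1) = b) ∨ (g i = b ∧ g (i+1) = a))}
      = k.factorial - 2 * k * (k - 2).factorial := by
  classical
  have key : Nat.card {g : Fin k → Fin k // Injective g}
      = Nat.card {g : Fin k → Fin k // Injective g ∧
          ∀ i : Fin k, ¬((g i = a ∧ g (i+1) = b) ∨ (g i = b ∧ g (i+1) = a))}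
        + Nat.card {g : Fin k → Fin k // Injective g ∧
          ∃ i : Fin k, (g i = a ∧ g (i+1) = b) ∨ (g i = b ∧ g (i+1) = a)} := by
    rw [Nat.card_eq_fintype_card, Nat.card_eq_fintype_card, Nat.card_eq_fintype_card,
      Fintype.card_subtype, Fintype.card_subtype, Fintype.card_subtype]
    have h := Finset.card_filter_add_card_filter_not
      (s := (univ : Finset (Fin k → Fin k)).filter (fun g => Injective g))
      (p := fun g => ∀ i : Fin k, ¬((g i = a ∧ g (i+1) = b) ∨ (g i = b ∧ g (i+1) = a)))
    rw [Finset.filter_filter, Finset.filter_filter] at h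
    have e2 : (univ : Finset (Fin k → Fin k)).filter
          (fun g => Injective g ∧ ¬ ∀ i : Fin k,
            ¬((g i = a ∧ g (i+1) = b) ∨ (g i = b ∧ g (i+1) = a)))
        = (univ : Finset (Fin k → Fin k)).filter
          (fun g => Injective g ∧ ∃ i : Fin k,
            (g i = a ∧ g (i+1) = b) ∨ (g i = b ∧ g (i+1) = a)) := by
      ext g; simp only [mem_filter, mem_univ, true_and, not_forall, not_not]
    rw [e2] at h
    exact h.symm
  have h1 := cardT k
  have h2 := cardBad k hk a b hab
  rw [h1, h2] at key
  exact Nat.eq_sub_of_add_eq key.symm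


lemma cardB (k : ℕ) (hk : 6 ≤ k) :
    Fintype.card {x : Fin (k + (k / 2 - 1)) // k ≤ x.val} = k / 2 - 1 := by
  have e : {x : Fin (k + (k / 2 - 1)) // k ≤ x.val} ≃ Fin (k / 2 - 1) :=
    { toFun := fun x => ⟨x.1.val - k, by have := x.1.isLt; have := x.2; omega⟩
      invFun := fun j => ⟨⟨k + j.val, by have := j.isLt; omega⟩, by simp⟩
      left_inv := by intro x; have := x.2; ext; simp; omega
      right_inv := by intro j; ext; simp }
  simp [Fintype.card_congr e]

lemma blue_iff (k : ℕ) [NeZero k] (hk : 6 ≤ k)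
    (u v : Fin (k + (k / 2 - 1))) (hu : u.val < k) (hv : v.val < k)
    (f : Fin k → Fin (k + (k / 2 - 1))) :
    IsCycleSeq (SimpleGraph.fromRel
        (fun x y => ((x.val < k) ≠ (y.val < k)) ∨ (x = u ∧ y = v)))ᶜ k f
    ↔ Injective f ∧ (∀ i, (f i).val < k) ∧
      (∀ i : Fin k, ¬((f i = u ∧ f (i+1) = v) ∨ (f i = v ∧ f (i+1) = u))) := by
  have hadj : ∀ x y : Fin (k + (k / 2 - 1)),
      (SimpleGraph.fromRel
        (fun x y => ((x.val < k) ≠ (y.val < k)) ∨ (x = u ∧ y = v)))ᶜ.Adj x y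
      ↔ x ≠ y ∧ ((x.val < k) ↔ (y.val < k)) ∧ ¬(x = u ∧ y = v) ∧ ¬(y = u ∧ x = v) := by
    intro x y
    simp only [SimpleGraph.compl_adj, SimpleGraph.fromRel_adj, ne_eq, eq_iff_iff]
    tauto
  have h01 : (0 : Fin k) ≠ 1 := by
    intro h; have := congrArg Fin.val h
    simp [Fin.val_one', Nat.mod_eq_of_lt (show (1:ℕ) < k by omega)] at this
  constructor
  · rintro ⟨finj, fadj⟩
    have adj : ∀ i : Fin k,
        (SimpleGraph.fromRel
          (fun x y => ((x.val < k) ≠ (y.val < k)) ∨ (x = u ∧ y = v)))ᶜ.Adj (f i) (f (i+1)) := by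
      intro i; have := fadj i; rwa [succ_idx_eq] at this
    have side : ∀ i : Fin k, ((f i).val < k ↔ (f (i+1)).val < k) :=
      fun i => ((hadj _ _).mp (adj i)).2.1
    have iter : ∀ (j : ℕ) (hj : j < k), ((f 0).val < k ↔ (f ⟨j, hj⟩).val < k) := by
      intro j
      induction j with
      | zero => intro hj; rw [show (⟨0, hj⟩ : Fin k) = 0 from Fin.ext (by simp)]
      | succ j ih =>
        intro hj
        have h1 := ih (by omega)
        have h2 := side ⟨j, by omega⟩
        have h3 : (⟨j, by omega⟩ : Fin k) + 1 = ⟨j + 1, hj⟩ := by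
          apply Fin.ext
          simp only [Fin.add_def, Fin.val_one']
          rw [Nat.mod_eq_of_lt (show 1 < k by omega), Nat.mod_eq_of_lt hj]
        rw [h3] at h2
        exact h1.trans h2
    have iter' : ∀ i : Fin k, ((f 0).val < k ↔ (f i).val < k) := by
      intro i
      have := iter i.val i.isLt
      rwa [show (⟨i.val, i.isLt⟩ : Fin k) = i from Fin.ext rfl] at this
    have allk : ∀ i : Fin k, (f i).val < k := by
      by_cases h0 : (f 0).val < k
      · exact fun i => (iter' i).mp h0
      · exfalso
        have hFinj : Injective (fun i : Fin k =>
            (⟨f i, not_lt.mp (fun h => h0 ((iter' i).mpr h))⟩ :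
              {x : Fin (k + (k / 2 - 1)) // k ≤ x.val})) :=
          fun i j h => finj (congrArg Subtype.val h)
        have := Fintype.card_le_of_injective _ hFinj
        rw [cardB k hk, Fintype.card_fin] at this
        omega
    refine ⟨finj, allk, ?_⟩
    intro i
    have := (hadj _ _).mp (adj i)
    tauto
  · rintro ⟨finj, allk, huv⟩
    refine ⟨finj, ?_⟩
    intro i
    rw [succ_idx_eq, hadj]
    refine ⟨?_, ?_, ?_, ?_⟩
    · intro h
      apply h01
      have hieq : i = i + 1 := finj h
      simpa [sub_self, add_sub_cancel_left] using congrArg (· - i) hieq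
    · constructor
      · intro _; exact allk (i+1)
      · intro _; exact allk i
    · exact fun hc => huv i (Or.inl hc)
    · exact fun hc => huv i (Or.inr ⟨hc.2, hc.1⟩)

lemma blue_count (k : ℕ) (hk : 6 ≤ k)
    (u v : Fin (k + (k / 2 - 1))) (huv : u ≠ v) (hu : u.val < k) (hv : v.val < k) :
    Nat.card {f : Fin k → Fin (k + (k / 2 - 1)) // IsCycleSeq (SimpleGraph.fromRel
        (fun x y => ((x.val < k) ≠ (y.val < k)) ∨ (x = u ∧ y = v)))ᶜ k f}
      = k.factorial - 2 * k * (k - 2).factorial := by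
  haveI : NeZero k := ⟨by omega⟩
  have hab : (⟨u.val, hu⟩ : Fin k) ≠ ⟨v.val, hv⟩ := by
    intro h
    have hval := congrArg Fin.val h
    exact huv (Fin.ext hval)
  have E1 : {f : Fin k → Fin (k + (k / 2 - 1)) // IsCycleSeq (SimpleGraph.fromRel
        (fun x y => ((x.val < k) ≠ (y.val < k)) ∨ (x = u ∧ y = v)))ᶜ k f}
      ≃ {f : Fin k → Fin (k + (k / 2 - 1)) // Injective f ∧ (∀ i, (f i).val < k) ∧
          (∀ i : Fin k, ¬((f i = u ∧ f (i+1) = v) ∨ (f i = v ∧ f (i+1) = u)))} :=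
    Equiv.subtypeEquivRight (fun f => blue_iff k hk u v hu hv f)
  have E2 : {f : Fin k → Fin (k + (k / 2 - 1)) // Injective f ∧ (∀ i, (f i).val < k) ∧
          (∀ i : Fin k, ¬((f i = u ∧ f (i+1) = v) ∨ (f i = v ∧ f (i+1) = u)))}
      ≃ {g : Fin k → Fin k // Injective g ∧
          ∀ i : Fin k, ¬((g i = ⟨u.val, hu⟩ ∧ g (i+1) = ⟨v.val, hv⟩) ∨
            (g i = ⟨v.val, hv⟩ ∧ g (i+1) = ⟨u.val, hu⟩))} :=
    { toFun := fun f =>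
        ⟨fun i => ⟨(f.1 i).val, f.2.2.1 i⟩,
          fun i j h => f.2.1 (by apply Fin.ext; have := congrArg Fin.val h; exact this),
          by
            intro i
            have := f.2.2.2 i
            simp only [Fin.ext_iff] at this ⊢
            exact this⟩
      invFun := fun g =>
        ⟨fun i => ⟨(g.1 i).val, lt_of_lt_of_le (g.1 i).isLt (Nat.le_add_right k _)⟩,
          fun i j h => g.2.1 (by apply Fin.ext; have := congrArg Fin.val h; exact this),
          fun i => (g.1 i).isLt,
          by
            intro i
            have := g.2.2 i
            simp only [Fin.ext_iff] at this ⊢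
            exact this⟩
      left_inv := by
        intro f
        apply Subtype.ext
        funext i
        apply Fin.ext
        rfl
      right_inv := by
        intro g
        apply Subtype.ext
        funext i
        apply Fin.ext
        rfl }
  rw [Nat.card_congr (E1.trans E2)]
  exact cardGood k hk _ _ hab

lemma arith_div (m t : ℕ) (hm : 4 ≤ m) :
    ((m+2)*(m+1)*(2*t) - 2*(m+2)*(2*t)) / (2*(m+2)) = ((m-1)*(2*t))/2 := by
  have h1 : (m+2)*(m+1)*(2*t) - 2*(m+2)*(2*t) = (2*(m+2)) * ((m-1)*t) := by
    have e1 : (m+2)*(m+1)*(2*t) = (2*(m+2)) * ((m+1)*t) := by ring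
    have e2 : 2*(m+2)*(2*t) = (2*(m+2)) * (2*t) := by ring
    rw [e1, e2, ← Nat.mul_sub]
    have h3 : m + 1 - 2 = m - 1 := by omega
    rw [← Nat.sub_mul, h3]
  rw [h1, Nat.mul_div_cancel_left _ (show 0 < 2*(m+2) by omega)]
  rw [show (m-1)*(2*t) = 2*((m-1)*t) by ring, Nat.mul_div_cancel_left _ (by omega : 0 < 2)]

/-- Let `k ≥ 6` be even. Color `K_{3k/2-1}` with parts `A` (first `k`
vertices) and `B` (remaining `k/2 - 1`): edges inside `B` blue, edges between `A` and
`B` red, one fixed edge `{u,v}` inside `A` red, all other edges inside `A` blue. Then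
there is no red copy of `C_k`, and the total number of monochromatic copies of `C_k`
is exactly `((k-3)/2)·(k-2)!` (all blue), written as `(k-3)·(k-2)!/2`. -/
theorem modified_chi_cycle_count (k : ℕ) (hk : 6 ≤ k) (hke : Even k)
    (u v : Fin (k + (k / 2 - 1))) (huv : u ≠ v) (hu : u.val < k) (hv : v.val < k) :
    (¬ ∃ f : Fin k → Fin (k + (k / 2 - 1)),
        IsCycleSeq (SimpleGraph.fromRel
          (fun x y => ((x.val < k) ≠ (y.val < k)) ∨ (x = u ∧ y = v))) k f) ∧
    cycleCount (SimpleGraph.fromRel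
        (fun x y => ((x.val < k) ≠ (y.val < k)) ∨ (x = u ∧ y = v))) k
      + cycleCount (SimpleGraph.fromRel
        (fun x y : Fin (k + (k / 2 - 1)) => ((x.val < k) ≠ (y.val < k)) ∨ (x = u ∧ y = v)))ᶜ k
      = (k - 3) * (k - 2).factorial / 2 := by
  haveI : NeZero k := ⟨by omega⟩
  have hnored := no_red_cycle k hk hke u v hu hv
  refine ⟨hnored, ?_⟩
  have hred : cycleCount (SimpleGraph.fromRel
      (fun x y : Fin (k + (k / 2 - 1)) =>
        ((x.val < k) ≠ (y.val < k)) ∨ (x = u ∧ y = v))) k = 0 := by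
    unfold cycleCount
    haveI : IsEmpty {f : Fin k → Fin (k + (k / 2 - 1)) // IsCycleSeq (SimpleGraph.fromRel
        (fun x y => ((x.val < k) ≠ (y.val < k)) ∨ (x = u ∧ y = v))) k f} :=
      ⟨fun x => hnored ⟨x.1, x.2⟩⟩
    rw [Nat.card_of_isEmpty]
    exact Nat.zero_div _
  rw [hred, zero_add]
  unfold cycleCount
  rw [blue_count k hk u v huv hu hv]
  obtain ⟨m, hm⟩ : ∃ m, k = m + 2 := ⟨k - 2, by omega⟩
  subst hm
  have hm4 : 4 ≤ m := by omega
  obtain ⟨t, ht⟩ : 2 ∣ m.factorial := Nat.dvd_factorial (by omega) (by omega)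
  have hfac2 : (m + 2 - 2).factorial = m.factorial := by norm_num
  have hfac : (m + 2).factorial = (m+2)*(m+1)*m.factorial := by
    rw [Nat.factorial_succ, Nat.factorial_succ]; ring
  rw [hfac2, hfac, ht]
  have h3 : m + 2 - 3 = m - 1 := by omega
  rw [h3]
  calc ((m+2)*(m+1)*(2*t) - 2*(m+2)*(2*t)) / (2*(m+2)) = ((m-1)*(2*t))/2 :=
        arith_div m t hm4
end

section
/- Suppose (U,V) is an ε-regular pair of disjoint vertex subsets of a graph G with |U|, |V| ≥ n, where n ≥ 5ε^{−2}, and d(U,V) = d with d > 5√ε. Let u, v ∈ U ∪ V be distinct vertices each adjacent to at least a (d−ε)-fraction of the vertices in the part not containing it. Let l be an integer with 3 ≤ l ≤ 2(1−2√ε)n, where l is even if u and v lie in the same part and odd if they lie in different parts. Then the number of paths of length l in G[U,V] with end vertices u and v is at least (d − 7√ε)^{l−1} · (εn) · ∏_{i=1}^{l−2} (n − ⌊i/2⌋). -/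
open Finset

/-! ### Auxiliary machinery -/

section PathMachinery

open Finset

variable {Om : Type*}

def snocF {α : Type*} {n : ℕ} (f : Fin n → α) (x : α) : Fin (n+1) → α := Fin.snoc f x

theorem snoc_lt {α : Type*} {n : ℕ} (f : Fin n → α) (x : α) (i : Fin (n+1)) (h : i.val < n) :
    snocF f x i = f ⟨i.val, h⟩ := by
  simp only [snocF, Fin.snoc, h, dif_pos, cast_eq]; rfl

theorem snoc_eq {α : Type*} {n : ℕ} (f : Fin n → α) (x : α) (i : Fin (n+1)) (h : i.val = n) :
    snocF f x i = x := by
  simp [snocF, Fin.snoc, h]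

theorem image_snoc {α : Type*} [DecidableEq α] {n : ℕ} (f : Fin n → α) (x : α) :
    Finset.image (snocF f x) Finset.univ = insert x (Finset.image f Finset.univ) := by
  ext y
  simp only [mem_image, mem_insert, mem_univ, true_and]
  constructor
  · rintro ⟨i, rfl⟩
    rcases Nat.lt_or_ge i.val n with h | h
    · exact Or.inr ⟨⟨i.val, h⟩, (snoc_lt f x i h).symm⟩
    · exact Or.inl (snoc_eq f x i (le_antisymm (by omega) h))
  · rintro (rfl | ⟨i, rfl⟩)
    · exact ⟨Fin.last n, snoc_eq f y (Fin.last n) rfl⟩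
    · exact ⟨⟨i.val, by omega⟩, snoc_lt f x _ i.isLt⟩

theorem injective_snoc {α : Type*} {n : ℕ} {f : Fin n → α} {x : α}
    (hf : Function.Injective f) (hx : ∀ i, f i ≠ x) :
    Function.Injective (snocF f x) := by
  intro a b hab
  rcases Nat.lt_or_ge a.val n with ha | ha <;> rcases Nat.lt_or_ge b.val n with hb | hb
  · rw [snoc_lt f x a ha, snoc_lt f x b hb] at hab
    have h2 := congrArg Fin.val (hf hab)
    ext; exact h2
  · rw [snoc_lt f x a ha, snoc_eq f x b (by omega)] at hab
    exact absurd hab (hx _)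
  · rw [snoc_eq f x a (by omega), snoc_lt f x b hb] at hab
    exact absurd hab.symm (hx _)
  · ext; omega

theorem injective_snocF {α : Type*} {n : ℕ} (f : Fin n → α) :
    Function.Injective (snocF f) := by
  intro a b hab
  have := congrFun hab (Fin.last n)
  rwa [snoc_eq f a _ rfl, snoc_eq f b _ rfl] at this

def chain {α : Type*} [DecidableEq α] (u : α) (C : ∀ j : ℕ, (Fin (j+1) → α) → Finset α) :
    ∀ j : ℕ, Finset (Fin (j+1) → α)
  | 0 => {fun _ => u}
  | (j+1) => (chain u C j).biUnion (fun f => (C j f).image (snocF f))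

theorem chain_ind {α : Type*} [DecidableEq α] {u : α} {C} (P : ∀ j : ℕ, (Fin (j+1) → α) → Prop)
    (h0 : P 0 (fun _ => u))
    (hstep : ∀ j f x, f ∈ chain u C j → P j f → x ∈ C j f → P (j+1) (snocF f x)) :
    ∀ j, ∀ f ∈ chain u C j, P j f := by
  intro j
  induction j with
  | zero =>
    intro f hf
    simp only [chain, mem_singleton] at hf
    subst hf; exact h0
  | succ j ih =>
    intro f hf
    simp only [chain, mem_biUnion, mem_image] at hf
    obtain ⟨g, hg, x, hx, rfl⟩ := hf
    exact hstep j g x hg (ih g hg) hx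

theorem chain_card {α : Type*} [DecidableEq α] {u : α} {C} (b : ℕ → ℝ) (m : ℕ)
    (hb : ∀ j, j < m → 0 ≤ b j)
    (hc : ∀ j, j < m → ∀ f ∈ chain u C j, b j ≤ ((C j f).card : ℝ)) :
    ∏ j ∈ Finset.range m, b j ≤ ((chain u C m).card : ℝ) := by
  induction m with
  | zero => simp [chain]
  | succ m ih =>
    rw [Finset.prod_range_succ]
    have h1 : ∏ j ∈ range m, b j ≤ ((chain u C m).card : ℝ) :=
      ih (fun j hj => hb j (by omega)) (fun j hj => hc j (by omega))
    have hdisj : ∀ f ∈ chain u C m, ∀ g ∈ chain u C m, f ≠ g →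
        Disjoint ((C m f).image (snocF f)) ((C m g).image (snocF g)) := by
      intro f _ g _ hfg
      rw [Finset.disjoint_left]
      rintro h hf hg
      simp only [mem_image] at hf hg
      obtain ⟨x, _, rfl⟩ := hf
      obtain ⟨y, _, he⟩ := hg
      apply hfg
      funext i
      have h2 := congrFun he i.castSucc
      have hi : (i.castSucc : Fin (m+2)).val < m + 1 := by simp [Fin.castSucc_lt_last i]; have := i.isLt; omega
      rw [snoc_lt g y _ hi, snoc_lt f x _ hi] at h2
      simpa using h2.symm
    have hcard : ((chain u C (m+1)).card : ℝ) = ∑ f ∈ chain u C m, ((C m f).card : ℝ) := by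
      rw [show chain u C (m+1) = (chain u C m).biUnion (fun f => (C m f).image (snocF f)) from rfl,
        Finset.card_biUnion hdisj]
      push_cast
      exact Finset.sum_congr rfl (fun f _ => by
        rw [Finset.card_image_of_injective _ (injective_snocF f)])
    rw [hcard]
    calc (∏ j ∈ range m, b j) * b m ≤ ((chain u C m).card : ℝ) * b m :=
          mul_le_mul_of_nonneg_right h1 (hb m (by omega))
      _ ≤ ∑ f ∈ chain u C m, ((C m f).card : ℝ) := by
          have := Finset.sum_le_sum (f := fun _ : (Fin (m+1) → α) => b m)
            (g := fun f => ((C m f).card : ℝ)) (s := chain u C m)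
            (fun f hf => hc m (by omega) f hf)
          simpa [Finset.sum_const, nsmul_eq_mul, mul_comm] using this

theorem prod_Icc_one (g : ℕ → ℝ) (m : ℕ) :
    ∏ i ∈ Finset.Icc 1 m, g i = ∏ j ∈ Finset.range m, g (j+1) := by
  induction m with
  | zero => simp
  | succ m ih =>
    rw [Finset.prod_range_succ, ← ih, Finset.prod_Icc_succ_top (by omega)]

end PathMachinery

section DensityLemmas
variable {Om : Type*}

/-- degree of `x` into `S` as a Finset count. -/
def fdeg (G : SimpleGraph Om) [DecidableRel G.Adj] (x : Om) (S : Finset Om) : ℕ :=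
  (S.filter (G.Adj x)).card

theorem nbrCount_eq (G : SimpleGraph Om) [DecidableRel G.Adj] (x : Om) (Y : Finset Om) :
    nbrCount G x Y = fdeg G x Y := by
  rw [nbrCount, fdeg]
  rw [Nat.card_congr (Equiv.subtypeEquivRight (q := fun y => y ∈ Y.filter (G.Adj x))
    (fun y => by simp [Finset.mem_filter]))]
  exact Nat.card_eq_finsetCard _

theorem eCnt_eq (G : SimpleGraph Om) [DecidableRel G.Adj] (X Y : Finset Om) :
    eCnt G X Y = ((X ×ˢ Y).filter (fun p => G.Adj p.1 p.2)).card := by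
  rw [eCnt]
  rw [Nat.card_congr (Equiv.subtypeEquivRight
    (q := fun p : Om × Om => p ∈ (X ×ˢ Y).filter (fun p => G.Adj p.1 p.2))
    (fun p => by simp [Finset.mem_filter, Finset.mem_product, and_assoc]))]
  exact Nat.card_eq_finsetCard _

theorem eCnt_eq_sum (G : SimpleGraph Om) [DecidableRel G.Adj] (X Y : Finset Om) :
    eCnt G X Y = ∑ x ∈ X, fdeg G x Y := by
  rw [eCnt_eq, Finset.card_filter, Finset.sum_product]
  exact Finset.sum_congr rfl (fun x _ => (Finset.card_filter _ _).symm)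

theorem eCnt_symm (G : SimpleGraph Om) (X Y : Finset Om) : eCnt G X Y = eCnt G Y X := by
  apply Nat.card_congr
  exact ⟨fun p => ⟨p.1.swap, p.2.2.1, p.2.1, p.2.2.2.symm⟩,
    fun p => ⟨p.1.swap, p.2.2.1, p.2.1, p.2.2.2.symm⟩,
    fun p => by ext <;> rfl, fun p => by ext <;> rfl⟩

theorem dens_symm (G : SimpleGraph Om) (X Y : Finset Om) : dens G X Y = dens G Y X := by
  simp only [_root_.dens]
  rw [eCnt_symm, mul_comm]

theorem regular_symm {G : SimpleGraph Om} {X Y : Finset Om} {ε : ℝ}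
    (h : IsRegularPair G X Y ε) : IsRegularPair G Y X ε := by
  intro U hU W hW h1 h2
  rw [dens_symm G U W, dens_symm G Y X]
  exact h W hW U hU h2 h1

theorem dens_nonneg (G : SimpleGraph Om) (X Y : Finset Om) : 0 ≤ dens G X Y := by
  simp only [_root_.dens]; positivity

theorem dens_le_one (G : SimpleGraph Om) {X Y : Finset Om}
    (hX : 0 < X.card) (hY : 0 < Y.card) : dens G X Y ≤ 1 := by
  classical
  simp only [_root_.dens]
  rw [div_le_one (by positivity), eCnt_eq]
  calc (((X ×ˢ Y).filter (fun p => G.Adj p.1 p.2)).card : ℝ)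
      ≤ ((X ×ˢ Y).card : ℝ) := by exact_mod_cast Finset.card_le_card (Finset.filter_subset _ _)
    _ = (X.card : ℝ) * Y.card := by rw [Finset.card_product]; push_cast; ring

/-- All but an `ε`-fraction of `X` has large degree into any large `S ⊆ Y`. -/
theorem atyp_card (G : SimpleGraph Om) [DecidableRel G.Adj] {X Y : Finset Om} {ε : ℝ}
    (hε : 0 < ε) (reg : IsRegularPair G X Y ε) (hX : 0 < X.card)
    {S : Finset Om} (hS : S ⊆ Y) (hS0 : 0 < S.card) (hScard : ε * Y.card ≤ S.card) :
    ((X.filter (fun x => (fdeg G x S : ℝ) < (dens G X Y - ε) * S.card)).card : ℝ)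
      ≤ ε * X.card := by
  by_contra hcon
  push_neg at hcon
  set T := X.filter (fun x => (fdeg G x S : ℝ) < (dens G X Y - ε) * S.card) with hT
  have hTsub : T ⊆ X := Finset.filter_subset _ _
  have hTne : T.Nonempty := by
    rw [← Finset.card_pos, ← Nat.cast_pos (α := ℝ)]
    calc (0:ℝ) ≤ ε * X.card := by positivity
      _ < T.card := hcon
  have hreg := reg T hTsub S hS (le_of_lt hcon) hScard
  have hlt : (eCnt G T S : ℝ) < (dens G X Y - ε) * S.card * T.card := by
    rw [eCnt_eq_sum]
    push_cast
    calc ∑ x ∈ T, (fdeg G x S : ℝ) < ∑ _x ∈ T, (dens G X Y - ε) * S.card := by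
          apply Finset.sum_lt_sum_of_nonempty hTne
          intro x hx
          exact (Finset.mem_filter.mp hx).2
      _ = (dens G X Y - ε) * S.card * T.card := by
          rw [Finset.sum_const, nsmul_eq_mul]; ring
  have hTpos : (0:ℝ) < T.card := by
    exact_mod_cast Finset.card_pos.mpr hTne
  have hSpos : (0:ℝ) < S.card := by exact_mod_cast hS0
  have hdlt : dens G T S < dens G X Y - ε := by
    simp only [_root_.dens]
    rw [div_lt_iff₀ (by positivity)]
    calc (eCnt G T S : ℝ) < (dens G X Y - ε) * S.card * T.card := hlt
      _ = (dens G X Y - ε) * ((T.card : ℝ) * S.card) := by ring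
  have := abs_le.mp hreg
  linarith [this.1]

end DensityLemmas

section KeyInequalities

theorem key0 {r n s k : ℝ} (hr : 0 < r) (hr5 : r < 1/5) (h625 : 625 ≤ r*n)
    (hs : n ≤ s) (hk0 : 0 ≤ k) (hk : k ≤ (1-2*r)*n - 1) :
    r^2*s ≤ s - (r^2*s+3) - k := by
  nlinarith [mul_nonneg (sub_nonneg.mpr hs) (by nlinarith : (0:ℝ) ≤ 1 - 2*r^2),
    mul_pos hr (by nlinarith : (0:ℝ) < n), sq_nonneg r]

theorem key1 {r d n s k : ℝ} (hr : 0 < r) (hrd : 5*r < d) (hd1 : d ≤ 1)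
    (h125 : 125 ≤ r^2*n) (hs : n ≤ s) (hk0 : 0 ≤ k) (hk : k ≤ (1-2*r)*n - 1) :
    |d - 7*r| * (n - k) ≤ (d - r^2) * (s - (r^2*s + 3) - k) - (r^2*s + 3) - 2*(r^2*s) := by
  have hr5 : r < 1/5 := by nlinarith
  have hn0 : (0:ℝ) < n := by nlinarith [sq_nonneg r]
  have ht : 0 ≤ s - n := by linarith
  have hcoef : 0 ≤ (d - r^2) * (1 - r^2) - 3*r^2 := by nlinarith
  have hnk : 2*r*n + 1 ≤ n - k := by nlinarith
  have hr2n : (0:ℝ) < r^2*n := by positivity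
  rcases le_or_gt (7*r) d with hcase | hcase
  · rw [abs_of_nonneg (by linarith)]
    nlinarith [mul_nonneg ht hcoef,
      mul_nonneg (by nlinarith : (0:ℝ) ≤ 7*r - r^2) (by nlinarith : (0:ℝ) ≤ n - k - (2*r*n+1)),
      mul_nonneg (by nlinarith : (0:ℝ) ≤ 1 - (d - r^2)) (by nlinarith : (0:ℝ) ≤ r^2*n + 3),
      mul_pos hr hn0, mul_pos (mul_pos hr hr) (mul_pos hr hn0)]
  · rw [abs_of_neg (by linarith)]
    nlinarith [mul_nonneg ht hcoef,
      mul_nonneg (by nlinarith : (0:ℝ) ≤ 2*d - 7*r - r^2) (by nlinarith : (0:ℝ) ≤ n - k - (2*r*n+1)),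
      mul_nonneg (by nlinarith : (0:ℝ) ≤ 1 - (d - r^2)) (by nlinarith : (0:ℝ) ≤ r^2*n + 3),
      mul_pos hr hn0, mul_pos (mul_pos hr hr) (mul_pos hr hn0)]

theorem key2 {r d zc n : ℝ} (hr : 0 < r) (hrd : 5*r < d) (hd1 : d ≤ 1)
    (hn : 0 ≤ n) (hz : r^2*n ≤ zc) :
    |d - 7*r| * (r^2*n) ≤ (d - r^2) * zc := by
  have hr5 : r < 1/5 := by nlinarith
  have h1 : 0 ≤ d - r^2 := by nlinarith
  have h2 : |d - 7*r| ≤ d - r^2 := by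
    rw [abs_le]; constructor <;> nlinarith
  calc |d - 7*r| * (r^2*n) ≤ (d - r^2) * (r^2*n) :=
        mul_le_mul_of_nonneg_right h2 (by positivity)
    _ ≤ (d - r^2) * zc := mul_le_mul_of_nonneg_left hz h1

end KeyInequalities

section CardHelpers

open Finset

variable {Om : Type*}

theorem fdeg_union_bound (G : SimpleGraph Om) [DecidableRel G.Adj] [DecidableEq Om]
    (x : Om) (S T : Finset Om) :
    fdeg G x S ≤ fdeg G x (S \ T) + (S ∩ T).card := by
  have hsub : S.filter (G.Adj x) ⊆ (S \ T).filter (G.Adj x) ∪ (S ∩ T) := by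
    intro y hy
    obtain ⟨hy1, hy2⟩ := Finset.mem_filter.mp hy
    by_cases hT : y ∈ T
    · exact Finset.mem_union_right _ (Finset.mem_inter.mpr ⟨hy1, hT⟩)
    · exact Finset.mem_union_left _ (Finset.mem_filter.mpr ⟨Finset.mem_sdiff.mpr ⟨hy1, hT⟩, hy2⟩)
  calc fdeg G x S ≤ ((S \ T).filter (G.Adj x) ∪ (S ∩ T)).card := Finset.card_le_card hsub
    _ ≤ fdeg G x (S \ T) + (S ∩ T).card := Finset.card_union_le _ _

theorem card_used [DecidableEq Om] {A B : Finset Om} (hdisj : Disjoint A B)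
    {j : ℕ} {f : Fin (j+1) → Om} {u : Om} (hinj : Function.Injective f)
    (hside : ∀ i : Fin (j+1), f i ∈ (if i.val % 2 = 0 then A else B)) (h0 : f 0 = u)
    {q : ℕ} {X : Finset Om} (hX : X ⊆ (if q % 2 = 0 then A else B)) (hu : u ∉ X) :
    ((Finset.image f Finset.univ) ∩ X).card ≤ (j+1)/2 := by
  have hsub : (Finset.image f Finset.univ) ∩ X ⊆
      Finset.image f (Finset.univ.filter (fun i : Fin (j+1) => i.val % 2 = q % 2 ∧ i.val ≠ 0)) := by
    intro y hy
    obtain ⟨hy1, hy2⟩ := Finset.mem_inter.mp hy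
    obtain ⟨i, _, rfl⟩ := Finset.mem_image.mp hy1
    refine Finset.mem_image.mpr ⟨i, Finset.mem_filter.mpr ⟨Finset.mem_univ _, ?_, ?_⟩, rfl⟩
    · by_contra hpar
      have h1 := hside i
      have h2 := hX hy2
      rcases Nat.mod_two_eq_zero_or_one i.val with hi | hi <;>
        rcases Nat.mod_two_eq_zero_or_one q with hq | hq
      · exact hpar (hi.trans hq.symm)
      · rw [if_pos hi] at h1; rw [if_neg (by omega)] at h2
        exact Finset.disjoint_left.mp hdisj h1 h2
      · rw [if_neg (by omega)] at h1; rw [if_pos hq] at h2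
        exact Finset.disjoint_left.mp hdisj h2 h1
      · exact hpar (hi.trans hq.symm)
    · intro hi0
      have hieq : i = 0 := by ext; simpa using hi0
      rw [hieq, h0] at hy2
      exact hu hy2
  calc ((Finset.image f Finset.univ) ∩ X).card
      ≤ (Finset.image f (Finset.univ.filter
          (fun i : Fin (j+1) => i.val % 2 = q % 2 ∧ i.val ≠ 0))).card :=
        Finset.card_le_card hsub
    _ ≤ (Finset.univ.filter (fun i : Fin (j+1) => i.val % 2 = q % 2 ∧ i.val ≠ 0)).card :=
        Finset.card_image_le
    _ ≤ (j+1)/2 := by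
        have := Finset.card_le_card_of_injOn (f := fun i : Fin (j+1) => (i.val - 1)/2)
          (s := Finset.univ.filter (fun i : Fin (j+1) => i.val % 2 = q % 2 ∧ i.val ≠ 0))
          (t := Finset.range ((j+1)/2)) ?_ ?_
        · simpa using this
        · intro i hi
          obtain ⟨-, hpar, hne⟩ := Finset.mem_filter.mp hi
          have hlt := i.isLt
          refine Finset.mem_range.mpr ?_
          show (i.val - 1)/2 < (j+1)/2
          omega
        · intro a ha b hb heq
          simp only [Finset.coe_filter, Set.mem_setOf_eq, Finset.mem_univ, true_and] at ha hb
          have heq' : (a.val - 1)/2 = (b.val - 1)/2 := heq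
          have h1 := a.isLt
          have h2 := b.isLt
          ext
          omega

theorem count_ge (G : SimpleGraph Om) (U V : Finset Om) (l : ℕ) (u v : Om)
    (S : Finset (Fin (l+1) → Om))
    (hmem : ∀ f ∈ S, IsAltPath G U V l f ∧ f 0 = u ∧ f (Fin.last l) = v) :
    (S.card : ℝ) ≤ (Nat.card {f : Fin (l+1) → Om //
        IsAltPath G U V l f ∧ f 0 = u ∧ f (Fin.last l) = v} : ℝ) := by
  classical
  set T : Set (Fin (l+1) → Om) :=
    {f | IsAltPath G U V l f ∧ f 0 = u ∧ f (Fin.last l) = v} with hT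
  have hTfin : T.Finite := by
    have hsub : T ⊆ Set.pi Set.univ (fun _ : Fin (l+1) => ((U ∪ V : Finset Om) : Set Om)) := by
      intro f hf i _
      have := hf.1.2.1 i
      simpa [Finset.mem_union] using this
    exact (Set.Finite.pi (fun _ => (U ∪ V).finite_toSet)).subset hsub
  have hsub2 : (↑S : Set (Fin (l+1) → Om)) ⊆ T := by
    intro f hf
    exact hmem f hf
  have h1 : Nat.card {f : Fin (l+1) → Om //
      IsAltPath G U V l f ∧ f 0 = u ∧ f (Fin.last l) = v} = T.ncard :=
    Nat.card_coe_set_eq T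
  have h2 : S.card = (↑S : Set (Fin (l+1) → Om)).ncard := (Set.ncard_coe_finset S).symm
  have h3 : (↑S : Set (Fin (l+1) → Om)).ncard ≤ T.ncard := Set.ncard_le_ncard hsub2 hTfin
  exact_mod_cast h2 ▸ h1 ▸ Nat.cast_le.mpr h3

theorem isalt_of_sides (G : SimpleGraph Om) (A B : Finset Om) (l : ℕ) (f : Fin (l+1) → Om)
    (h1 : Function.Injective f)
    (hside : ∀ i : Fin (l+1), f i ∈ (if i.val % 2 = 0 then A else B))
    (hadj : ∀ (i : Fin (l+1)) (h : i.val+1 < l+1), G.Adj (f i) (f ⟨i.val+1, h⟩)) :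
    IsAltPath G A B l f := by
  refine ⟨h1, fun i => ?_, fun i h => ⟨hadj i h, ?_⟩⟩
  · have := hside i
    by_cases hp : i.val % 2 = 0
    · rw [if_pos hp] at this; exact Or.inl this
    · rw [if_neg hp] at this; exact Or.inr this
  · have hi := hside i
    have hi1 := hside ⟨i.val+1, h⟩
    by_cases hp : i.val % 2 = 0
    · rw [if_pos hp] at hi
      rw [if_neg (by simp only; omega)] at hi1
      exact Or.inl ⟨hi, hi1⟩
    · rw [if_neg hp] at hi
      rw [if_pos (by simp only; omega)] at hi1
      exact Or.inr ⟨hi, hi1⟩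

theorem isalt_swap {G : SimpleGraph Om} {A B : Finset Om} {l : ℕ} {f : Fin (l+1) → Om}
    (h : IsAltPath G A B l f) : IsAltPath G B A l f := by
  obtain ⟨h1, h2, h3⟩ := h
  exact ⟨h1, fun i => (h2 i).symm, fun i hh => ⟨(h3 i hh).1, (h3 i hh).2.symm⟩⟩

end CardHelpers

section AuxMain

open Finset

variable {Om : Type*}


theorem snoc_zero {α : Type*} {n : ℕ} (f : Fin (n+1) → α) (x : α) :
    snocF f x 0 = f 0 := by
  have h1 : ((0 : Fin (n+2))).val < n+1 := by simp
  have h2 : (⟨(0 : Fin (n+2)).val, h1⟩ : Fin (n+1)) = 0 := by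
    refine Fin.ext ?_
    simp
  rw [snoc_lt f x 0 h1, h2]

set_option maxHeartbeats 2000000 in
theorem aux_count [DecidableEq Om] (G : SimpleGraph Om) [DecidableRel G.Adj]
    (A B : Finset Om) (hdisj : Disjoint A B) (ε : ℝ) (hε : 0 < ε) (n : ℕ)
    (hA : n ≤ A.card) (hB : n ≤ B.card) (hn : 5 * ε⁻¹ ^ 2 ≤ (n : ℝ))
    (regAB : IsRegularPair G A B ε) (regBA : IsRegularPair G B A ε)
    (hd : 5 * Real.sqrt ε < dens G A B)
    (u v : Om) (huv : u ≠ v) (hu : u ∈ A)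
    (l : ℕ) (hl3 : 3 ≤ l) (hl2 : (l : ℝ) ≤ 2 * (1 - 2 * Real.sqrt ε) * n)
    (hv : v ∈ (if l % 2 = 0 then A else B))
    (hdegu : (dens G A B - ε) * B.card ≤ (fdeg G u B : ℝ))
    (hdegv : (dens G A B - ε) * ((if (l + 1) % 2 = 0 then A else B).card : ℝ)
        ≤ (fdeg G v (if (l + 1) % 2 = 0 then A else B) : ℝ)) :
    ∃ S : Finset (Fin (l + 1) → Om),
      ((dens G A B - 7 * Real.sqrt ε) ^ (l - 1) * (ε * n) *
          ∏ i ∈ Finset.Icc 1 (l - 2), ((n : ℝ) - ((i / 2 : ℕ) : ℝ)) ≤ (S.card : ℝ)) ∧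
      ∀ f ∈ S, Function.Injective f ∧ f 0 = u ∧ f (Fin.last l) = v ∧
        (∀ i : Fin (l + 1), f i ∈ (if i.val % 2 = 0 then A else B)) ∧
        (∀ (i : Fin (l + 1)) (h : i.val + 1 < l + 1), G.Adj (f i) (f ⟨i.val + 1, h⟩)) := by
  obtain ⟨m, hm1, rfl⟩ : ∃ m, 1 ≤ m ∧ l = m + 2 := ⟨l - 2, by omega, by omega⟩
  set r := Real.sqrt ε with hrdef
  set d := dens G A B with hddef
  -- numeric facts
  have hr0 : 0 < r := Real.sqrt_pos.mpr hε
  have hε_eq : ε = r^2 := by rw [hrdef, Real.sq_sqrt hε.le]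
  have hn0R : (0:ℝ) < n := lt_of_lt_of_le (by positivity) hn
  have hn0 : 0 < n := by exact_mod_cast hn0R
  have hA0 : 0 < A.card := lt_of_lt_of_le hn0 hA
  have hB0 : 0 < B.card := lt_of_lt_of_le hn0 hB
  have hd1 : d ≤ 1 := dens_le_one G hA0 hB0
  have hrd : 5 * r < d := hd
  have hr5 : r < 1/5 := by linarith
  have hr4n : (5:ℝ) ≤ r^4 * n := by
    rw [hε_eq] at hn
    have h4 : ((r^2)⁻¹)^2 = (r^4)⁻¹ := by
      rw [← inv_pow]; ring_nf
    rw [h4] at hn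
    have := mul_le_mul_of_nonneg_left hn (le_of_lt (by positivity : (0:ℝ) < r^4))
    calc (5:ℝ) = r^4 * (5 * (r^4)⁻¹) := by field_simp
      _ ≤ r^4 * n := by nlinarith [this]
  have hrn_pos : (0:ℝ) < r * n := mul_pos hr0 hn0R
  have h625 : (625:ℝ) ≤ r * n := by
    have h3 : r^3 < 1/125 := by nlinarith [sq_nonneg r, mul_pos hr0 hr0]
    have h4 : r^3 * (r*n) < (1/125) * (r*n) := mul_lt_mul_of_pos_right h3 hrn_pos
    have h5 : r^4 * n = r^3 * (r*n) := by ring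
    rw [h5] at hr4n
    linarith
  have hr2n_pos : (0:ℝ) < r^2 * n := by positivity
  have h125 : (125:ℝ) ≤ r^2 * n := by
    have h2 : r^2 < 1/25 := by nlinarith
    have h4 : r^2 * (r^2*n) < (1/25) * (r^2*n) := mul_lt_mul_of_pos_right h2 hr2n_pos
    have h5 : r^4 * n = r^2 * (r^2*n) := by ring
    rw [h5] at hr4n
    linarith
  have hεn : (125:ℝ) ≤ ε * n := by rw [hε_eq]; exact h125
  have hεr : ε < r := by
    rw [hε_eq]
    have := mul_lt_mul_of_pos_left hr5 hr0
    nlinarith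
  have hdε0 : (0:ℝ) ≤ d - ε := by linarith
  have hm2n : m + 2 ≤ 2 * n := by
    have : ((m:ℝ) + 2) ≤ 2 * n := by
      push_cast at hl2
      nlinarith
    exact_mod_cast this
  -- sides
  set sd : ℕ → Finset Om := fun i => if i % 2 = 0 then A else B with hsd
  have sd_card : ∀ i, n ≤ (sd i).card := by
    intro i
    by_cases h : i % 2 = 0 <;> simp [hsd, h, hA, hB]
  have sd_card0 : ∀ i, 0 < (sd i).card := fun i => lt_of_lt_of_le hn0 (sd_card i)
  have sd_eq : ∀ i q, i % 2 = q % 2 → sd i = sd q := by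
    intro i q h; simp only [hsd, h]
  have sd_disj : ∀ i q, i % 2 ≠ q % 2 → ∀ x, x ∈ sd i → x ∈ sd q → False := by
    intro i q h x hx hq
    rcases Nat.mod_two_eq_zero_or_one i with hi | hi <;>
      rcases Nat.mod_two_eq_zero_or_one q with hq2 | hq2
    · exact h (hi.trans hq2.symm)
    · simp only [hsd, hi, hq2] at hx hq
      norm_num at hx hq
      exact Finset.disjoint_left.mp hdisj hx hq
    · simp only [hsd, hi, hq2] at hx hq
      norm_num at hx hq
      exact Finset.disjoint_left.mp hdisj hq hx
    · exact h (hi.trans hq2.symm)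
  have hu0 : u ∈ sd 0 := by simpa [hsd] using hu
  have hv' : v ∈ sd (m+2) := by simpa [hsd] using hv
  have hdegv' : (d - ε) * ((sd (m+1)).card : ℝ) ≤ (fdeg G v (sd (m+1)) : ℝ) := by
    have hpar : (m + 2 + 1) % 2 = (m+1) % 2 := by omega
    have : (if (m + 2 + 1) % 2 = 0 then A else B) = sd (m+1) := by
      simp only [hsd, hpar]
    rwa [this] at hdegv
  have hregd : ∀ q, IsRegularPair G (sd q) (sd (q+1)) ε ∧ dens G (sd q) (sd (q+1)) = d := by
    intro q
    by_cases hq : q % 2 = 0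
    · have h1 : sd q = A := by simp [hsd, hq]
      have h2 : sd (q+1) = B := by
        have hq1 : (q+1) % 2 = 1 := by omega
        simp [hsd, hq1]
      rw [h1, h2]
      exact ⟨regAB, rfl⟩
    · have h1 : sd q = B := by simp [hsd, hq]
      have h2 : sd (q+1) = A := by
        have hq1 : (q+1) % 2 = 0 := by omega
        simp [hsd, hq1]
      rw [h1, h2]
      exact ⟨regBA, (dens_symm G B A)⟩
  -- the reservoir Z
  have hufilt : u ∉ ((sd (m+1)).filter (G.Adj v)) \ {u} := by
    simp
  have hzfilt : ⌈ε * (((sd (m+1)).card : ℝ))⌉₊ ≤ (((sd (m+1)).filter (G.Adj v)) \ {u}).card := by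
    have hPn : (n:ℝ) ≤ ((sd (m+1)).card : ℝ) := by exact_mod_cast sd_card (m+1)
    have hP0 : (0:ℝ) ≤ ((sd (m+1)).card : ℝ) := Nat.cast_nonneg _
    have hrP : r * n ≤ r * ((sd (m+1)).card : ℝ) := mul_le_mul_of_nonneg_left hPn hr0.le
    have hgap : ε * ((sd (m+1)).card : ℝ) + 2 ≤ (d - ε) * ((sd (m+1)).card : ℝ) - 1 := by
      have hco : (0:ℝ) ≤ d - 2*ε - 3*r := by linarith
      nlinarith [mul_nonneg hco hP0]
    have herase : ((((sd (m+1)).filter (G.Adj v)).card : ℝ)) - 1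
        ≤ ((((sd (m+1)).filter (G.Adj v)) \ {u}).card : ℝ) := by
      rw [Finset.sdiff_singleton_eq_erase]
      have := Finset.pred_card_le_card_erase (s := (sd (m+1)).filter (G.Adj v)) (a := u)
      have h2 : (((sd (m+1)).filter (G.Adj v)).card : ℝ) - 1
          ≤ ((((sd (m+1)).filter (G.Adj v)).card - 1 : ℕ) : ℝ) := by
        push_cast
        rcases Nat.eq_zero_or_pos ((sd (m+1)).filter (G.Adj v)).card with h | h
        · simp [h]
        · rw [Nat.cast_sub h]; push_cast; ring_nf; rfl
      exact h2.trans (by exact_mod_cast this)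
    have hceil : (⌈ε * (((sd (m+1)).card : ℝ))⌉₊ : ℝ) < ε * ((sd (m+1)).card : ℝ) + 1 :=
      Nat.ceil_lt_add_one (mul_nonneg hε.le (Nat.cast_nonneg _))
    have hfv : (d - ε) * ((sd (m+1)).card : ℝ) ≤ (fdeg G v (sd (m+1)) : ℝ) := hdegv'
    have : (⌈ε * (((sd (m+1)).card : ℝ))⌉₊ : ℝ)
        ≤ ((((sd (m+1)).filter (G.Adj v)) \ {u}).card : ℝ) := by
      have : (fdeg G v (sd (m+1)) : ℝ) = (((sd (m+1)).filter (G.Adj v)).card : ℝ) := rfl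
      linarith
    exact_mod_cast this
  obtain ⟨Z, hZsub, hZcard⟩ := Finset.exists_subset_card_eq hzfilt
  have hZP : Z ⊆ sd (m+1) := fun x hx =>
    (Finset.mem_filter.mp (Finset.mem_sdiff.mp (hZsub hx)).1).1
  have hZadj : ∀ x ∈ Z, G.Adj v x := fun x hx =>
    (Finset.mem_filter.mp (Finset.mem_sdiff.mp (hZsub hx)).1).2
  have hZu : u ∉ Z := fun h => (Finset.mem_sdiff.mp (hZsub h)).2 (Finset.mem_singleton_self u)
  have hZv : v ∉ Z := fun h => sd_disj (m+1) (m+2) (by omega) v (hZP h) hv'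
  have hZlb : ε * n ≤ (Z.card : ℝ) := by
    rw [hZcard]
    calc ε * n ≤ ε * ((sd (m+1)).card : ℝ) := by
          have := sd_card (m+1); apply mul_le_mul_of_nonneg_left _ hε.le; exact_mod_cast this
      _ ≤ _ := Nat.le_ceil _
  have hZlb' : ε * ((sd (m+1)).card : ℝ) ≤ (Z.card : ℝ) := by
    rw [hZcard]; exact Nat.le_ceil _
  have hZub : (Z.card : ℝ) ≤ ε * ((sd (m+1)).card : ℝ) + 1 := by
    rw [hZcard]
    exact le_of_lt (Nat.ceil_lt_add_one (mul_nonneg hε.le (Nat.cast_nonneg _)))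
  have hZ0 : 0 < Z.card := by
    have : (0:ℝ) < Z.card := lt_of_lt_of_le (by nlinarith) hZlb
    exact_mod_cast this
  -- the forbidden set W
  set W : Finset Om := Z ∪ {u, v} with hWdef
  have huW : u ∈ W := by simp [hWdef]
  have hvW : v ∈ W := by simp [hWdef]
  have hZW : Z ⊆ W := Finset.subset_union_left
  have hWcap : ∀ q, ((W ∩ sd q).card : ℝ) ≤ ε * ((sd q).card : ℝ) + 3 := by
    intro q
    have hsub : W ∩ sd q ⊆ (Z ∩ sd q) ∪ {u, v} := by
      intro x hx
      obtain ⟨hxW, hxs⟩ := Finset.mem_inter.mp hx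
      rcases Finset.mem_union.mp hxW with hZx | hx2
      · exact Finset.mem_union_left _ (Finset.mem_inter.mpr ⟨hZx, hxs⟩)
      · exact Finset.mem_union_right _ hx2
    have hc2 : (W ∩ sd q).card ≤ (Z ∩ sd q).card + 2 := by
      calc (W ∩ sd q).card ≤ ((Z ∩ sd q) ∪ {u, v}).card := Finset.card_le_card hsub
        _ ≤ (Z ∩ sd q).card + ({u, v} : Finset Om).card := Finset.card_union_le _ _
        _ ≤ (Z ∩ sd q).card + 2 := by
            have : ({u, v} : Finset Om).card ≤ 2 :=
              (Finset.card_insert_le u {v}).trans (by simp)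
            omega
    by_cases hq : q % 2 = (m+1) % 2
    · have hqq : sd q = sd (m+1) := sd_eq q (m+1) hq
      have hZq : Z ∩ sd q = Z := Finset.inter_eq_left.mpr (hqq ▸ hZP)
      rw [hZq] at hc2
      have := hZub
      calc ((W ∩ sd q).card : ℝ) ≤ (Z.card : ℝ) + 2 := by exact_mod_cast hc2
        _ ≤ ε * ((sd (m+1)).card : ℝ) + 3 := by linarith
        _ = ε * ((sd q).card : ℝ) + 3 := by rw [hqq]
    · have hZq : Z ∩ sd q = ∅ := by
        rw [Finset.eq_empty_iff_forall_notMem]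
        intro x hx
        obtain ⟨hx1, hx2⟩ := Finset.mem_inter.mp hx
        exact sd_disj (m+1) q (fun hh => hq hh.symm) x (hZP hx1) hx2
      rw [hZq] at hc2
      simp only [Finset.card_empty, Nat.zero_add] at hc2
      have h1 : (0:ℝ) ≤ ε * ((sd q).card : ℝ) := mul_nonneg hε.le (Nat.cast_nonneg _)
      calc ((W ∩ sd q).card : ℝ) ≤ 2 := by exact_mod_cast hc2
        _ ≤ ε * ((sd q).card : ℝ) + 3 := by linarith
  -- target sets
  set Rf : ∀ j : ℕ, (Fin (j+1) → Om) → Finset Om :=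
    fun j f => ((sd (j+1)) \ W) \ Finset.image f Finset.univ with hRfdef
  set R2f : ∀ j : ℕ, (Fin (j+1) → Om) → Finset Om :=
    fun j f => ((sd (j+2)) \ W) \ Finset.image f Finset.univ with hR2fdef
  -- choice rule
  set C : ∀ j : ℕ, (Fin (j+1) → Om) → Finset Om := fun j f =>
    if j + 1 ≤ m then
      (Rf j f).filter (fun x => G.Adj (f (Fin.last j)) x ∧
        ((d - ε) * ((R2f j f).card : ℝ) ≤ (fdeg G x (R2f j f) : ℝ)) ∧
        (j + 1 = m → (d - ε) * (Z.card : ℝ) ≤ (fdeg G x Z : ℝ)))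
    else if j + 1 = m + 1 then Z.filter (fun x => G.Adj (f (Fin.last j)) x)
    else if j + 1 = m + 2 then {v}
    else ∅
    with hCdef
  -- invariant
  set Pv : ∀ j : ℕ, (Fin (j+1) → Om) → Prop := fun j f =>
    f 0 = u ∧ Function.Injective f ∧
    (∀ i : Fin (j+1), f i ∈ sd i.val) ∧
    (∀ (i : Fin (j+1)) (h : i.val + 1 < j + 1), G.Adj (f i) (f ⟨i.val + 1, h⟩)) ∧
    (∀ i : Fin (j+1), 1 ≤ i.val → i.val ≤ m → f i ∉ W) ∧
    (∀ i : Fin (j+1), i.val = m + 1 → f i ∈ Z) ∧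
    (∀ i : Fin (j+1), i.val = m + 2 → f i = v) ∧
    (j ≤ m → (d - ε) * ((Rf j f).card : ℝ) - (ε * ((sd (j+1)).card : ℝ) + 3)
        ≤ (fdeg G (f (Fin.last j)) (Rf j f) : ℝ)) ∧
    (j = m → (d - ε) * (Z.card : ℝ) ≤ (fdeg G (f (Fin.last j)) Z : ℝ))
    with hPvdef
  have h0 : Pv 0 (fun _ => u) := by
    refine ⟨rfl, fun a b _ => Fin.ext (by omega), ?_, ?_, ?_, ?_, ?_, ?_, ?_⟩
    · intro i
      have : i.val = 0 := by omega
      rw [this]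
      exact hu0
    · intro i h
      exact absurd h (by omega)
    · intro i h1 _
      exact absurd h1 (by omega)
    · intro i hi
      exact absurd hi (by omega)
    · intro i hi
      exact absurd hi (by omega)
    · intro _
      have hsd1B : sd 1 = B := by simp [hsd]
      have hR0 : Rf 0 (fun _ => u) = (sd 1) \ W := by
        simp only [hRfdef]
        rw [Finset.image_const Finset.univ_nonempty u, Finset.sdiff_singleton_eq_erase]
        apply Finset.erase_eq_of_notMem
        intro h
        exact (Finset.mem_sdiff.mp h).2 huW
      have hb1 : fdeg G u (sd 1) ≤ fdeg G u ((sd 1) \ W) + ((sd 1) ∩ W).card :=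
        fdeg_union_bound G u (sd 1) W
      have hb1R : (fdeg G u (sd 1) : ℝ) ≤ (fdeg G u ((sd 1) \ W) : ℝ) + (((sd 1) ∩ W).card : ℝ) := by
        exact_mod_cast hb1
      have hcapR : (((sd 1) ∩ W).card : ℝ) ≤ ε * ((sd 1).card : ℝ) + 3 := by
        rw [Finset.inter_comm]
        exact hWcap 1
      have hRsub : ((Rf 0 (fun _ => u)).card : ℝ) ≤ ((sd 1).card : ℝ) := by
        rw [hR0]
        exact_mod_cast Finset.card_le_card (Finset.sdiff_subset)
      have hdeguB : (d - ε) * ((sd 1).card : ℝ) ≤ (fdeg G u (sd 1) : ℝ) := by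
        rw [hsd1B]; exact hdegu
      have hmono : (d - ε) * ((Rf 0 (fun _ => u)).card : ℝ) ≤ (d - ε) * ((sd 1).card : ℝ) :=
        mul_le_mul_of_nonneg_left hRsub hdε0
      have : fdeg G ((fun _ : Fin 1 => u) (Fin.last 0)) (Rf 0 (fun _ => u))
          = fdeg G u ((sd 1) \ W) := by rw [hR0]
      rw [this]
      linarith
    · intro h
      exact absurd h (by omega)
  have hcommon : ∀ (j : ℕ) (f : Fin (j+1) → Om) (x : Om), f 0 = u → Function.Injective f →
      (∀ i : Fin (j+1), f i ∈ sd i.val) →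
      (∀ (i : Fin (j+1)) (h : i.val + 1 < j + 1), G.Adj (f i) (f ⟨i.val + 1, h⟩)) →
      (∀ i : Fin (j+1), f i ≠ x) → x ∈ sd (j+1) → G.Adj (f (Fin.last j)) x →
      ((snocF f x) 0 = u ∧ Function.Injective (snocF f x) ∧
        (∀ i : Fin (j+2), snocF f x i ∈ sd i.val) ∧
        (∀ (i : Fin (j+2)) (h : i.val + 1 < j + 2),
          G.Adj (snocF f x i) (snocF f x ⟨i.val + 1, h⟩))) := by
    intro j f x hP0 hPinj hPside hPadj hxne hxsd hxadj
    refine ⟨by rw [snoc_zero]; exact hP0, injective_snoc hPinj hxne, ?_, ?_⟩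
    · intro i
      rcases Nat.lt_or_ge i.val (j+1) with h | h
      · rw [snoc_lt f x i h]
        exact hPside ⟨i.val, h⟩
      · have hie : i.val = j+1 := by omega
        rw [snoc_eq f x i hie, hie]
        exact hxsd
    · intro i h
      rcases Nat.lt_or_ge (i.val + 1) (j+1) with h' | h'
      · have hi1 : i.val < j + 1 := by omega
        have hi2 : ((⟨i.val + 1, h⟩ : Fin (j+2))).val < j + 1 := h'
        rw [snoc_lt f x i hi1, snoc_lt f x _ hi2]
        exact hPadj ⟨i.val, by omega⟩ h'
      · have hie : ((⟨i.val + 1, h⟩ : Fin (j+2))).val = j + 1 := by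
          have := i.isLt
          simp only
          omega
        have hi1 : i.val < j + 1 := by omega
        rw [snoc_lt f x i hi1, snoc_eq f x _ hie]
        have hlast : (⟨i.val, hi1⟩ : Fin (j+1)) = Fin.last j := by
          refine Fin.ext ?_
          simp only [Fin.val_last]
          omega
        rw [hlast]
        exact hxadj
  have hstep : ∀ j f x, f ∈ chain u C j → Pv j f → x ∈ C j f → Pv (j+1) (snocF f x) := by
    intro j f x _ hP hx
    obtain ⟨hP0, hPinj, hPside, hPadj, hPW, hPZ, hPveq, hPtyp, hPtypZ⟩ := hP
    have glast : snocF f x (Fin.last (j+1)) = x := snoc_eq f x _ rfl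
    simp only [hCdef] at hx
    split_ifs at hx with hb1 hb2 hb3
    · -- generic step, position j+1 ≤ m
      rw [Finset.mem_filter] at hx
      obtain ⟨hxR, hxadj, hxtyp, hxguard⟩ := hx
      have hxR' := hxR
      simp only [hRfdef, Finset.mem_sdiff] at hxR'
      obtain ⟨⟨hxsd, hxW⟩, hxim⟩ := hxR'
      have hxne : ∀ i : Fin (j+1), f i ≠ x :=
        fun i h => hxim (Finset.mem_image.mpr ⟨i, Finset.mem_univ i, h⟩)
      obtain ⟨g1, g2, g3, g4⟩ := hcommon j f x hP0 hPinj hPside hPadj hxne hxsd hxadj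
      refine ⟨g1, g2, g3, g4, ?_, ?_, ?_, ?_, ?_⟩
      · intro i h1 h2
        rcases Nat.lt_or_ge i.val (j+1) with h | h
        · rw [snoc_lt f x i h]
          exact hPW ⟨i.val, h⟩ h1 h2
        · rw [snoc_eq f x i (by omega)]
          exact hxW
      · intro i hieq
        rcases Nat.lt_or_ge i.val (j+1) with h | h
        · rw [snoc_lt f x i h]
          exact hPZ ⟨i.val, h⟩ hieq
        · exact absurd hieq (by omega)
      · intro i hieq
        rcases Nat.lt_or_ge i.val (j+1) with h | h
        · rw [snoc_lt f x i h]
          exact hPveq ⟨i.val, h⟩ hieq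
        · exact absurd hieq (by omega)
      · intro _
        have hReq : Rf (j+1) (snocF f x) = R2f j f := by
          simp only [hRfdef, hR2fdef]
          rw [image_snoc, Finset.sdiff_insert]
          apply Finset.erase_eq_of_notMem
          intro hmem
          have hx2 : x ∈ sd (j+1+1) := (Finset.mem_sdiff.mp (Finset.mem_sdiff.mp hmem).1).1
          exact sd_disj (j+1) (j+2) (by omega) x hxsd hx2
        rw [glast, hReq]
        have h3 : (0:ℝ) ≤ ε * (((sd (j+1+1)).card : ℝ)) + 3 := add_nonneg (mul_nonneg hε.le (Nat.cast_nonneg _)) (by norm_num)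
        linarith
      · intro hjm1
        rw [glast]
        exact hxguard hjm1
    · -- Z step, position j+1 = m+1
      rw [Finset.mem_filter] at hx
      obtain ⟨hxZ, hxadj⟩ := hx
      have hxsd : x ∈ sd (j+1) := by
        have : sd (j+1) = sd (m+1) := by rw [hb2]
        rw [this]
        exact hZP hxZ
      have hxne : ∀ i : Fin (j+1), f i ≠ x := by
        intro i heq
        by_cases h0i : i.val = 0
        · have hieq : i = (0 : Fin (j+1)) := Fin.ext (by simpa using h0i)
          rw [hieq, hP0] at heq
          exact hZu (heq ▸ hxZ)
        · have h1 : 1 ≤ i.val := by omega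
          have h2 : i.val ≤ m := by
            have := i.isLt
            omega
          exact hPW i h1 h2 (heq ▸ hZW hxZ)
      obtain ⟨g1, g2, g3, g4⟩ := hcommon j f x hP0 hPinj hPside hPadj hxne hxsd hxadj
      refine ⟨g1, g2, g3, g4, ?_, ?_, ?_, ?_, ?_⟩
      · intro i h1 h2
        rcases Nat.lt_or_ge i.val (j+1) with h | h
        · rw [snoc_lt f x i h]
          exact hPW ⟨i.val, h⟩ h1 h2
        · exact absurd h2 (by omega)
      · intro i hieq
        rcases Nat.lt_or_ge i.val (j+1) with h | h
        · rw [snoc_lt f x i h]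
          exact hPZ ⟨i.val, h⟩ hieq
        · rw [snoc_eq f x i (by omega)]
          exact hxZ
      · intro i hieq
        rcases Nat.lt_or_ge i.val (j+1) with h | h
        · rw [snoc_lt f x i h]
          exact hPveq ⟨i.val, h⟩ hieq
        · exact absurd hieq (by omega)
      · intro h
        exact absurd h (by omega)
      · intro h
        exact absurd h (by omega)
    · -- final step, position j+1 = m+2
      rw [Finset.mem_singleton] at hx
      subst hx
      have hxsd : x ∈ sd (j+1) := by
        have : sd (j+1) = sd (m+2) := by rw [hb3]
        rw [this]
        exact hv'
      have hxne : ∀ i : Fin (j+1), f i ≠ x := by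
        intro i heq
        by_cases h0i : i.val = 0
        · have hieq : i = (0 : Fin (j+1)) := Fin.ext (by simpa using h0i)
          rw [hieq, hP0] at heq
          exact huv heq
        · by_cases hmi : i.val ≤ m
          · exact hPW i (by omega) hmi (heq ▸ hvW)
          · have h2 : i.val = m + 1 := by
              have := i.isLt
              omega
            exact hZv (heq ▸ hPZ i h2)
      have hxadj : G.Adj (f (Fin.last j)) x := by
        have hlZ : f (Fin.last j) ∈ Z := hPZ (Fin.last j) (by simp [Fin.val_last]; omega)
        exact (hZadj _ hlZ).symm
      obtain ⟨g1, g2, g3, g4⟩ := hcommon j f x hP0 hPinj hPside hPadj hxne hxsd hxadj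
      refine ⟨g1, g2, g3, g4, ?_, ?_, ?_, ?_, ?_⟩
      · intro i h1 h2
        rcases Nat.lt_or_ge i.val (j+1) with h | h
        · rw [snoc_lt f x i h]
          exact hPW ⟨i.val, h⟩ h1 h2
        · exact absurd h2 (by omega)
      · intro i hieq
        rcases Nat.lt_or_ge i.val (j+1) with h | h
        · rw [snoc_lt f x i h]
          exact hPZ ⟨i.val, h⟩ hieq
        · exact absurd hieq (by omega)
      · intro i hieq
        rcases Nat.lt_or_ge i.val (j+1) with h | h
        · rw [snoc_lt f x i h]
          exact hPveq ⟨i.val, h⟩ hieq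
        · exact snoc_eq f x i (by omega)
      · intro h
        exact absurd h (by omega)
      · intro h
        exact absurd h (by omega)
    · exact absurd hx (Finset.notMem_empty x)
  have hinv : ∀ j, ∀ f ∈ chain u C j, Pv j f := chain_ind Pv h0 hstep
  -- counting
  set Mabs : ℝ := |d - 7*r| with hMdef
  set b : ℕ → ℝ := fun j =>
    if j + 1 ≤ m then Mabs * ((n:ℝ) - (((j+1)/2 : ℕ) : ℝ))
    else if j + 1 = m + 1 then Mabs * (ε * n)
    else 1
    with hbdef
  have hkle : ∀ j : ℕ, j + 1 ≤ m → (((((j+1))/2 : ℕ) : ℝ)) ≤ (1 - 2*r) * n - 1 := by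
    intro j hj
    have h1 : 2 * ((j+1)/2) ≤ m := by omega
    have h1R : 2 * ((((j+1)/2 : ℕ)) : ℝ) ≤ (m : ℝ) := by exact_mod_cast h1
    push_cast at hl2
    linarith
  have hkn : ∀ j : ℕ, j + 1 ≤ m → (((((j+1))/2 : ℕ) : ℝ)) ≤ (n : ℝ) := by
    intro j hj
    have := hkle j hj
    nlinarith [mul_pos hr0 hn0R]
  have hb0 : ∀ j, j < m + 2 → 0 ≤ b j := by
    intro j _
    simp only [hbdef]
    split_ifs with h1 h2
    · exact mul_nonneg (abs_nonneg _) (by linarith [hkn j h1])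
    · exact mul_nonneg (abs_nonneg _) (by positivity)
    · norm_num
  have hc : ∀ j, j < m + 2 → ∀ f ∈ chain u C j, b j ≤ ((C j f).card : ℝ) := by
    intro j hj f hf
    obtain ⟨hP0, hPinj, hPside, hPadj, hPW, hPZ, hPveq, hPtyp, hPtypZ⟩ := hinv j f hf
    simp only [hCdef, hbdef]
    split_ifs with hb1 hb2 hb3
    · -- generic step
      have hjm : j ≤ m := by omega
      have htyp := hPtyp hjm
      have hkR := hkle j hb1
      have hkRn := hkn j hb1
      have hs1 : (n:ℝ) ≤ ((sd (j+1)).card : ℝ) := by exact_mod_cast sd_card (j+1)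
      have hs2 : (n:ℝ) ≤ ((sd (j+2)).card : ℝ) := by exact_mod_cast sd_card (j+2)
      have hside' : ∀ i : Fin (j+1), f i ∈ (if i.val % 2 = 0 then A else B) := by
        intro i
        have := hPside i
        simpa [hsd] using this
      -- lower bound on Rf
      have hu1 : u ∉ (sd (j+1)) \ W := fun h => (Finset.mem_sdiff.mp h).2 huW
      have hX1 : (sd (j+1)) \ W ⊆ (if (j+1) % 2 = 0 then A else B) := by
        intro y hy
        have := (Finset.mem_sdiff.mp hy).1
        simpa [hsd] using this
      have husedR : ((Finset.image f Finset.univ) ∩ ((sd (j+1)) \ W)).card ≤ (j+1)/2 :=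
        card_used hdisj hPinj hside' hP0 hX1 hu1
      have e1 : ((sd (j+1)) \ W).card + ((sd (j+1)) ∩ W).card = (sd (j+1)).card :=
        Finset.card_sdiff_add_card_inter _ _
      have e2 : (Rf j f).card + (((sd (j+1)) \ W) ∩ (Finset.image f Finset.univ)).card
          = ((sd (j+1)) \ W).card := by
        simp only [hRfdef]
        exact Finset.card_sdiff_add_card_inter _ _
      have e1R : (((sd (j+1)) \ W).card : ℝ) + (((sd (j+1)) ∩ W).card : ℝ)
          = ((sd (j+1)).card : ℝ) := by exact_mod_cast e1
      have e2R : ((Rf j f).card : ℝ) + ((((sd (j+1)) \ W) ∩ (Finset.image f Finset.univ)).card : ℝ)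
          = (((sd (j+1)) \ W).card : ℝ) := by exact_mod_cast e2
      have husedRR : ((((sd (j+1)) \ W) ∩ (Finset.image f Finset.univ)).card : ℝ)
          ≤ (((j+1)/2 : ℕ) : ℝ) := by
        rw [Finset.inter_comm]
        exact_mod_cast husedR
      have hcap1 : (((sd (j+1)) ∩ W).card : ℝ) ≤ ε * ((sd (j+1)).card : ℝ) + 3 := by
        rw [Finset.inter_comm]
        exact hWcap (j+1)
      have hRlb : ((sd (j+1)).card : ℝ) - (ε * ((sd (j+1)).card : ℝ) + 3) - (((j+1)/2 : ℕ) : ℝ)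
          ≤ ((Rf j f).card : ℝ) := by linarith
      -- lower bound on R2f
      have hu2 : u ∉ (sd (j+2)) \ W := fun h => (Finset.mem_sdiff.mp h).2 huW
      have hX2 : (sd (j+2)) \ W ⊆ (if (j+2) % 2 = 0 then A else B) := by
        intro y hy
        have := (Finset.mem_sdiff.mp hy).1
        simpa [hsd] using this
      have husedR2 : ((Finset.image f Finset.univ) ∩ ((sd (j+2)) \ W)).card ≤ (j+1)/2 :=
        card_used hdisj hPinj hside' hP0 hX2 hu2
      have e3 : ((sd (j+2)) \ W).card + ((sd (j+2)) ∩ W).card = (sd (j+2)).card :=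
        Finset.card_sdiff_add_card_inter _ _
      have e4 : (R2f j f).card + (((sd (j+2)) \ W) ∩ (Finset.image f Finset.univ)).card
          = ((sd (j+2)) \ W).card := by
        simp only [hR2fdef]
        exact Finset.card_sdiff_add_card_inter _ _
      have e3R : (((sd (j+2)) \ W).card : ℝ) + (((sd (j+2)) ∩ W).card : ℝ)
          = ((sd (j+2)).card : ℝ) := by exact_mod_cast e3
      have e4R : ((R2f j f).card : ℝ) + ((((sd (j+2)) \ W) ∩ (Finset.image f Finset.univ)).card : ℝ)
          = (((sd (j+2)) \ W).card : ℝ) := by exact_mod_cast e4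
      have husedR2R : ((((sd (j+2)) \ W) ∩ (Finset.image f Finset.univ)).card : ℝ)
          ≤ (((j+1)/2 : ℕ) : ℝ) := by
        rw [Finset.inter_comm]
        exact_mod_cast husedR2
      have hcap2 : (((sd (j+2)) ∩ W).card : ℝ) ≤ ε * ((sd (j+2)).card : ℝ) + 3 := by
        rw [Finset.inter_comm]
        exact hWcap (j+2)
      have hR2lb : ((sd (j+2)).card : ℝ) - (ε * ((sd (j+2)).card : ℝ) + 3) - (((j+1)/2 : ℕ) : ℝ)
          ≤ ((R2f j f).card : ℝ) := by linarith
      have hkey0 : r^2 * ((sd (j+2)).card : ℝ)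
          ≤ ((sd (j+2)).card : ℝ) - (r^2 * ((sd (j+2)).card : ℝ) + 3) - (((j+1)/2 : ℕ) : ℝ) :=
        key0 hr0 hr5 h625 hs2 (by positivity) hkR
      have hS'card : ε * ((sd (j+2)).card : ℝ) ≤ ((R2f j f).card : ℝ) := by
        rw [hε_eq]
        rw [hε_eq] at hR2lb
        linarith
      have hS'0 : 0 < (R2f j f).card := by
        have h1 : (0:ℝ) < ε * ((sd (j+2)).card : ℝ) := by
          have := sd_card0 (j+2)
          have : (0:ℝ) < ((sd (j+2)).card : ℝ) := by exact_mod_cast this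
          exact mul_pos hε this
        have : (0:ℝ) < ((R2f j f).card : ℝ) := lt_of_lt_of_le h1 hS'card
        exact_mod_cast this
      have hS'sub : R2f j f ⊆ sd (j+2) := by
        simp only [hR2fdef]
        exact Finset.sdiff_subset.trans Finset.sdiff_subset
      -- bad sets
      have hreg' := (hregd (j+1)).1
      have hd' := (hregd (j+1)).2
      set bad1 := (sd (j+1)).filter
        (fun y => (fdeg G y (R2f j f) : ℝ) < (d - ε) * ((R2f j f).card : ℝ)) with hbad1def
      set bad2 := (sd (j+1)).filter
        (fun y => ¬(j + 1 = m → (d - ε) * (Z.card : ℝ) ≤ (fdeg G y Z : ℝ))) with hbad2def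
      have hbad1 : ((bad1.card) : ℝ) ≤ ε * ((sd (j+1)).card : ℝ) := by
        have h := atyp_card G hε hreg' (sd_card0 (j+1)) hS'sub hS'0 hS'card
        simp only [hd'] at h
        exact h
      have hbad2 : ((bad2.card) : ℝ) ≤ ε * ((sd (j+1)).card : ℝ) := by
        by_cases hjm2 : j + 1 = m
        · have heq : bad2 = (sd (j+1)).filter
              (fun y => (fdeg G y Z : ℝ) < (d - ε) * (Z.card : ℝ)) := by
            rw [hbad2def]
            apply Finset.filter_congr
            intro y _
            simp [hjm2, not_le]
          have hZsub2 : Z ⊆ sd (j+2) := by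
            have h22 : sd (j+2) = sd (m+1) := by rw [show j+2 = m+1 from by omega]
            rw [h22]
            exact hZP
          have hZcard2 : ε * ((sd (j+2)).card : ℝ) ≤ (Z.card : ℝ) := by
            have h22 : sd (j+2) = sd (m+1) := by rw [show j+2 = m+1 from by omega]
            rw [h22]
            exact hZlb'
          have h := atyp_card G hε hreg' (sd_card0 (j+1)) hZsub2 hZ0 hZcard2
          simp only [hd'] at h
          rw [heq]
          exact h
        · have heq : bad2 = ∅ := by
            rw [hbad2def]
            apply Finset.filter_false_of_mem
            intro y _
            intro hcon
            exact hcon (fun habs => absurd habs hjm2)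
          rw [heq]
          simp only [Finset.card_empty, Nat.cast_zero]
          exact mul_nonneg hε.le (Nat.cast_nonneg _)
      -- subset inclusion
      have hsubC : (Rf j f).filter (G.Adj (f (Fin.last j))) ⊆ (C j f) ∪ bad1 ∪ bad2 := by
        intro y hy
        obtain ⟨hyR, hyadj⟩ := Finset.mem_filter.mp hy
        have hyR2 := hyR
        simp only [hRfdef, Finset.mem_sdiff] at hyR2
        have hysd : y ∈ sd (j+1) := hyR2.1.1
        rw [Finset.mem_union, Finset.mem_union]
        by_cases ht1 : (d - ε) * ((R2f j f).card : ℝ) ≤ (fdeg G y (R2f j f) : ℝ)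
        · by_cases ht2 : j + 1 = m → (d - ε) * (Z.card : ℝ) ≤ (fdeg G y Z : ℝ)
          · left; left
            simp only [hCdef]
            rw [if_pos hb1]
            exact Finset.mem_filter.mpr ⟨hyR, hyadj, ht1, ht2⟩
          · right
            exact Finset.mem_filter.mpr ⟨hysd, ht2⟩
        · left; right
          exact Finset.mem_filter.mpr ⟨hysd, by rwa [not_le] at ht1⟩
      have hcardsub : (fdeg G (f (Fin.last j)) (Rf j f) : ℝ)
          ≤ ((C j f).card : ℝ) + (bad1.card : ℝ) + (bad2.card : ℝ) := by
        have h1 : ((Rf j f).filter (G.Adj (f (Fin.last j)))).card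
            ≤ ((C j f) ∪ bad1 ∪ bad2).card := Finset.card_le_card hsubC
        have h2 : ((C j f) ∪ bad1 ∪ bad2).card ≤ ((C j f) ∪ bad1).card + bad2.card :=
          Finset.card_union_le _ _
        have h3 : ((C j f) ∪ bad1).card ≤ (C j f).card + bad1.card :=
          Finset.card_union_le _ _
        have h4 : fdeg G (f (Fin.last j)) (Rf j f)
            = ((Rf j f).filter (G.Adj (f (Fin.last j)))).card := rfl
        rw [h4]
        exact_mod_cast (h1.trans (h2.trans (by omega)))
      -- final combination
      have hmono : (d - ε) * (((sd (j+1)).card : ℝ) - (ε * ((sd (j+1)).card : ℝ) + 3)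
            - (((j+1)/2 : ℕ) : ℝ)) ≤ (d - ε) * ((Rf j f).card : ℝ) :=
        mul_le_mul_of_nonneg_left hRlb hdε0
      have hkey1 := key1 (s := ((sd (j+1)).card : ℝ)) (k := (((j+1)/2 : ℕ) : ℝ))
        hr0 hrd hd1 h125 hs1 (by positivity) hkR
      rw [← hε_eq] at hkey1
      have hCub : (C j f).card = (((Rf j f).filter (fun x => G.Adj (f (Fin.last j)) x ∧
          ((d - ε) * ((R2f j f).card : ℝ) ≤ (fdeg G x (R2f j f) : ℝ)) ∧
          (j + 1 = m → (d - ε) * (Z.card : ℝ) ≤ (fdeg G x Z : ℝ)))).card) := by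
        simp only [hCdef]
        rw [if_pos hb1]
      rw [← hMdef] at hkey1
      calc Mabs * ((n:ℝ) - (((j+1)/2 : ℕ) : ℝ))
          ≤ (d - ε) * (((sd (j+1)).card : ℝ) - (ε * ((sd (j+1)).card : ℝ) + 3)
              - (((j+1)/2 : ℕ) : ℝ)) - (ε * ((sd (j+1)).card : ℝ) + 3)
              - 2*(ε * ((sd (j+1)).card : ℝ)) := hkey1
        _ ≤ ((C j f).card : ℝ) := by
            rw [hCub] at hcardsub ⊢
            linarith
        _ = _ := by rw [hCub]
    · -- Z step
      have hjm : j = m := by omega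
      have htZ := hPtypZ hjm
      have hZlbr : r^2 * (n:ℝ) ≤ (Z.card : ℝ) := by rw [← hε_eq]; exact hZlb
      have hkey := key2 (n := (n:ℝ)) hr0 hrd hd1 (by positivity) hZlbr
      calc Mabs * (ε * (n:ℝ)) = |d - 7*r| * (r^2 * (n:ℝ)) := by rw [hMdef, hε_eq]
        _ ≤ (d - r^2) * (Z.card : ℝ) := hkey
        _ = (d - ε) * (Z.card : ℝ) := by rw [← hε_eq]
        _ ≤ (fdeg G (f (Fin.last j)) Z : ℝ) := htZ
        _ = (((Z.filter (G.Adj (f (Fin.last j))))).card : ℝ) := rfl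
    · -- v step
      simp
    · -- impossible
      exact absurd hj (by omega)
  have hcount := chain_card b (m+2) hb0 hc
  refine ⟨chain u C (m+2), ?_, ?_⟩
  · have em1 : m + 2 - 1 = m + 1 := by omega
    have em2 : m + 2 - 2 = m := by omega
    rw [em1, em2]
    have hprodIcc : ∏ i ∈ Finset.Icc 1 m, ((n:ℝ) - ((i/2 : ℕ) : ℝ))
        = ∏ j ∈ Finset.range m, ((n:ℝ) - (((j+1)/2 : ℕ) : ℝ)) :=
      prod_Icc_one (fun i => (n:ℝ) - ((i/2 : ℕ) : ℝ)) m
    have hfacIcc : ∀ i ∈ Finset.Icc 1 m, 0 ≤ (n:ℝ) - ((i/2 : ℕ) : ℝ) := by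
      intro i hi
      have him : i ≤ m := (Finset.mem_Icc.mp hi).2
      have : (i/2 : ℕ) ≤ n := by omega
      have : ((i/2 : ℕ) : ℝ) ≤ (n : ℝ) := by exact_mod_cast this
      linarith
    have hprod_nonneg : 0 ≤ ∏ i ∈ Finset.Icc 1 m, ((n:ℝ) - ((i/2 : ℕ) : ℝ)) :=
      Finset.prod_nonneg hfacIcc
    have hpow : (d - 7*r) ^ (m+1) ≤ Mabs ^ (m+1) := by
      calc (d - 7*r) ^ (m+1) ≤ |(d - 7*r) ^ (m+1)| := le_abs_self _
        _ = Mabs ^ (m+1) := by rw [abs_pow, hMdef]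
    have hεn0 : (0:ℝ) ≤ ε * n := by positivity
    have hstep2 : (d - 7*r) ^ (m+1) * (ε * (n:ℝ)) *
          ∏ i ∈ Finset.Icc 1 m, ((n:ℝ) - ((i/2 : ℕ) : ℝ))
        ≤ Mabs ^ (m+1) * (ε * (n:ℝ)) *
          ∏ i ∈ Finset.Icc 1 m, ((n:ℝ) - ((i/2 : ℕ) : ℝ)) := by
      apply mul_le_mul_of_nonneg_right _ hprod_nonneg
      exact mul_le_mul_of_nonneg_right hpow hεn0
    have hbm : b m = Mabs * (ε * (n:ℝ)) := by
      simp [hbdef, (by omega : ¬ (m + 1 ≤ m))]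
    have hbm1 : b (m+1) = 1 := by
      simp [hbdef, (by omega : ¬ (m + 1 + 1 = m + 1))]
    have hbrange : ∏ j ∈ Finset.range m, b j
        = Mabs ^ m * ∏ j ∈ Finset.range m, ((n:ℝ) - (((j+1)/2 : ℕ) : ℝ)) := by
      have h1 : ∏ j ∈ Finset.range m, b j
          = ∏ j ∈ Finset.range m, (Mabs * ((n:ℝ) - (((j+1)/2 : ℕ) : ℝ))) := by
        apply Finset.prod_congr rfl
        intro j hj
        have hjlt : j + 1 ≤ m := Finset.mem_range.mp hj
        simp only [hbdef]
        rw [if_pos hjlt]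
      rw [h1, Finset.prod_mul_distrib, Finset.prod_const, Finset.card_range]
    have hptotal : ∏ j ∈ Finset.range (m+2), b j
        = Mabs ^ (m+1) * (ε * (n:ℝ)) * ∏ i ∈ Finset.Icc 1 m, ((n:ℝ) - ((i/2 : ℕ) : ℝ)) := by
      rw [Finset.prod_range_succ, Finset.prod_range_succ, hbm, hbm1, hbrange, hprodIcc]
      ring
    calc (d - 7*r) ^ (m+1) * (ε * (n:ℝ)) * ∏ i ∈ Finset.Icc 1 m, ((n:ℝ) - ((i/2 : ℕ) : ℝ))
        ≤ Mabs ^ (m+1) * (ε * (n:ℝ)) * ∏ i ∈ Finset.Icc 1 m, ((n:ℝ) - ((i/2 : ℕ) : ℝ)) := hstep2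
      _ = ∏ j ∈ Finset.range (m+2), b j := hptotal.symm
      _ ≤ ((chain u C (m+2)).card : ℝ) := hcount
  · intro f hf
    obtain ⟨hP0, hPinj, hPside, hPadj, _, _, hPv, _, _⟩ := hinv (m+2) f hf
    refine ⟨hPinj, hP0, hPv (Fin.last (m+2)) rfl, fun i => ?_, hPadj⟩
    simpa [hsd] using hPside i

end AuxMain

set_option maxHeartbeats 1000000 in
/-- counting paths of length `l` between two fixed vertices of large degree
in a regular pair (Lemma 2.7 of the paper). -/
theorem count_paths_between_vertices {Om : Type*} (G : SimpleGraph Om) (U V : Finset Om)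
    (hdisj : Disjoint U V) (ε : ℝ) (hε : 0 < ε) (n : ℕ)
    (hU : n ≤ U.card) (hV : n ≤ V.card) (hn : 5 * ε⁻¹ ^ 2 ≤ (n : ℝ))
    (hreg : IsRegularPair G U V ε)
    (hd : 5 * Real.sqrt ε < dens G U V)
    (u v : Om) (huv : u ≠ v) (hu : u ∈ U ∨ u ∈ V) (hv : v ∈ U ∨ v ∈ V)
    (hdegu1 : u ∈ U → (dens G U V - ε) * V.card ≤ (nbrCount G u V : ℝ))
    (hdegu2 : u ∈ V → (dens G U V - ε) * U.card ≤ (nbrCount G u U : ℝ))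
    (hdegv1 : v ∈ U → (dens G U V - ε) * V.card ≤ (nbrCount G v V : ℝ))
    (hdegv2 : v ∈ V → (dens G U V - ε) * U.card ≤ (nbrCount G v U : ℝ))
    (l : ℕ) (hl3 : 3 ≤ l) (hl2 : (l : ℝ) ≤ 2 * (1 - 2 * Real.sqrt ε) * n)
    (hpar_same : ((u ∈ U ∧ v ∈ U) ∨ (u ∈ V ∧ v ∈ V)) → Even l)
    (hpar_diff : ((u ∈ U ∧ v ∈ V) ∨ (u ∈ V ∧ v ∈ U)) → Odd l) :
    (dens G U V - 7 * Real.sqrt ε) ^ (l - 1) * (ε * n) *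
        ∏ i ∈ Finset.Icc 1 (l - 2), ((n : ℝ) - ((i / 2 : ℕ) : ℝ))
      ≤ (Nat.card {f : Fin (l + 1) → Om //
          IsAltPath G U V l f ∧ f 0 = u ∧ f (Fin.last l) = v} : ℝ) := by
  classical
  haveI : DecidableEq Om := Classical.decEq Om
  haveI : DecidableRel G.Adj := Classical.decRel _
  have hregsym : IsRegularPair G V U ε := regular_symm hreg
  have hdsym : dens G V U = dens G U V := dens_symm G V U
  rcases hu with huU | huV
  · have hdegu' : (dens G U V - ε) * (V.card : ℝ) ≤ (fdeg G u V : ℝ) := by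
      rw [← nbrCount_eq]; exact hdegu1 huU
    rcases hv with hvU | hvV
    · -- u, v ∈ U : l even
      have hEl : l % 2 = 0 := Nat.even_iff.mp (hpar_same (Or.inl ⟨huU, hvU⟩))
      have hvside : v ∈ (if l % 2 = 0 then U else V) := by
        rw [if_pos hEl]; exact hvU
      have hdegv' : (dens G U V - ε) * (((if (l + 1) % 2 = 0 then U else V)).card : ℝ)
          ≤ (fdeg G v (if (l + 1) % 2 = 0 then U else V) : ℝ) := by
        rw [if_neg (by omega)]
        rw [← nbrCount_eq]
        exact hdegv1 hvU
      obtain ⟨S, hScard, hSmem⟩ := aux_count G U V hdisj ε hε n hU hV hn hreg hregsym hd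
        u v huv huU l hl3 hl2 hvside hdegu' hdegv'
      refine le_trans hScard (count_ge G U V l u v S ?_)
      intro f hf
      obtain ⟨h1, h2, h3, h4, h5⟩ := hSmem f hf
      exact ⟨isalt_of_sides G U V l f h1 h4 h5, h2, h3⟩
    · -- u ∈ U, v ∈ V : l odd
      have hOl : l % 2 = 1 := Nat.odd_iff.mp (hpar_diff (Or.inl ⟨huU, hvV⟩))
      have hvside : v ∈ (if l % 2 = 0 then U else V) := by
        rw [if_neg (by omega)]; exact hvV
      have hdegv' : (dens G U V - ε) * (((if (l + 1) % 2 = 0 then U else V)).card : ℝ)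
          ≤ (fdeg G v (if (l + 1) % 2 = 0 then U else V) : ℝ) := by
        rw [if_pos (by omega)]
        rw [← nbrCount_eq]
        exact hdegv2 hvV
      obtain ⟨S, hScard, hSmem⟩ := aux_count G U V hdisj ε hε n hU hV hn hreg hregsym hd
        u v huv huU l hl3 hl2 hvside hdegu' hdegv'
      refine le_trans hScard (count_ge G U V l u v S ?_)
      intro f hf
      obtain ⟨h1, h2, h3, h4, h5⟩ := hSmem f hf
      exact ⟨isalt_of_sides G U V l f h1 h4 h5, h2, h3⟩
  · -- u ∈ V : swap the roles of U and V
    have hd' : 5 * Real.sqrt ε < dens G V U := by rw [hdsym]; exact hd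
    have hdegu' : (dens G V U - ε) * (U.card : ℝ) ≤ (fdeg G u U : ℝ) := by
      rw [hdsym, ← nbrCount_eq]; exact hdegu2 huV
    rcases hv with hvU | hvV
    · -- v ∈ U : l odd
      have hOl : l % 2 = 1 := Nat.odd_iff.mp (hpar_diff (Or.inr ⟨huV, hvU⟩))
      have hvside : v ∈ (if l % 2 = 0 then V else U) := by
        rw [if_neg (by omega)]; exact hvU
      have hdegv' : (dens G V U - ε) * (((if (l + 1) % 2 = 0 then V else U)).card : ℝ)
          ≤ (fdeg G v (if (l + 1) % 2 = 0 then V else U) : ℝ) := by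
        rw [if_pos (by omega)]
        rw [hdsym, ← nbrCount_eq]
        exact hdegv1 hvU
      obtain ⟨S, hScard, hSmem⟩ := aux_count G V U hdisj.symm ε hε n hV hU hn hregsym hreg hd'
        u v huv huV l hl3 hl2 hvside hdegu' hdegv'
      rw [hdsym] at hScard
      refine le_trans hScard (count_ge G U V l u v S ?_)
      intro f hf
      obtain ⟨h1, h2, h3, h4, h5⟩ := hSmem f hf
      exact ⟨isalt_swap (isalt_of_sides G V U l f h1 h4 h5), h2, h3⟩
    · -- u, v ∈ V : l even
      have hEl : l % 2 = 0 := Nat.even_iff.mp (hpar_same (Or.inr ⟨huV, hvV⟩))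
      have hvside : v ∈ (if l % 2 = 0 then V else U) := by
        rw [if_pos hEl]; exact hvV
      have hdegv' : (dens G V U - ε) * (((if (l + 1) % 2 = 0 then V else U)).card : ℝ)
          ≤ (fdeg G v (if (l + 1) % 2 = 0 then V else U) : ℝ) := by
        rw [if_neg (by omega)]
        rw [hdsym, ← nbrCount_eq]
        exact hdegv2 hvV
      obtain ⟨S, hScard, hSmem⟩ := aux_count G V U hdisj.symm ε hε n hV hU hn hregsym hreg hd'
        u v huv huV l hl3 hl2 hvside hdegu' hdegv'
      rw [hdsym] at hScard
      refine le_trans hScard (count_ge G U V l u v S ?_)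
      intro f hf
      obtain ⟨h1, h2, h3, h4, h5⟩ := hSmem f hf
      exact ⟨isalt_swap (isalt_of_sides G V U l f h1 h4 h5), h2, h3⟩
end

section
/- For every positive integer t and every two-coloring of the edges of the complete graph K_n, there exist a vertex subset W with |W| ≥ n − 28t and a color (red or blue) such that W is (t,3)-well-connected in the graph of that color. -/
open Finset

namespace WCAux

open SimpleGraph

variable {V : Type*}

/-- `t` internally disjoint paths of length ≤ 3 from `p` to `q` in `H`. -/
def Good (H : SimpleGraph V) (t : ℕ) (p q : V) : Prop :=
  ∃ P : Fin t → H.Walk p q, Function.Injective P ∧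
    (∀ i, (P i).IsPath ∧ (P i).length ≤ 3) ∧
    (∀ i j, i ≠ j → ∀ x, x ∈ (P i).support → x ∈ (P j).support → x = p ∨ x = q)

noncomputable def mkWalk (H : SimpleGraph V) {p q : V} (a b : V)
    (h1 : H.Adj p a) (h2 : a = b ∨ H.Adj a b) (h3 : H.Adj b q) : H.Walk p q :=
  @dite _ (a = b) (Classical.dec _)
    (fun h => SimpleGraph.Walk.cons h1 (SimpleGraph.Walk.cons (h ▸ h3) SimpleGraph.Walk.nil))
    (fun h => SimpleGraph.Walk.cons h1 (SimpleGraph.Walk.cons (h2.resolve_left h)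
      (SimpleGraph.Walk.cons h3 SimpleGraph.Walk.nil)))

lemma mkWalk_support_subset (H : SimpleGraph V) {p q : V} (a b : V)
    (h1 : H.Adj p a) (h2 : a = b ∨ H.Adj a b) (h3 : H.Adj b q) :
    ∀ x ∈ (mkWalk H a b h1 h2 h3).support, x = p ∨ x = a ∨ x = b ∨ x = q := by
  intro x hx
  unfold mkWalk at hx
  split_ifs at hx with h
  · simp only [Walk.support_cons, Walk.support_nil, List.mem_cons, List.mem_singleton] at hx
    tauto
  · simp only [Walk.support_cons, Walk.support_nil, List.mem_cons, List.mem_singleton] at hx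
    tauto

lemma mkWalk_a_mem (H : SimpleGraph V) {p q : V} (a b : V)
    (h1 : H.Adj p a) (h2 : a = b ∨ H.Adj a b) (h3 : H.Adj b q) :
    a ∈ (mkWalk H a b h1 h2 h3).support := by
  unfold mkWalk
  split_ifs with h <;> simp

lemma mkWalk_length (H : SimpleGraph V) {p q : V} (a b : V)
    (h1 : H.Adj p a) (h2 : a = b ∨ H.Adj a b) (h3 : H.Adj b q) :
    (mkWalk H a b h1 h2 h3).length ≤ 3 := by
  unfold mkWalk
  split_ifs with h <;> simp

lemma mkWalk_isPath (H : SimpleGraph V) {p q : V} (a b : V)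
    (h1 : H.Adj p a) (h2 : a = b ∨ H.Adj a b) (h3 : H.Adj b q)
    (hpq : p ≠ q) (haq : a ≠ q) (hbp : b ≠ p) :
    (mkWalk H a b h1 h2 h3).IsPath := by
  unfold mkWalk
  split_ifs with h
  · rw [Walk.isPath_def]
    simp only [Walk.support_cons, Walk.support_nil, List.nodup_cons, List.mem_cons,
      List.mem_singleton, List.not_mem_nil, List.nodup_nil]
    simp [h1.ne, hpq, haq]
  · have hab : H.Adj a b := h2.resolve_left h
    rw [Walk.isPath_def]
    simp only [Walk.support_cons, Walk.support_nil, List.nodup_cons, List.mem_cons,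
      List.mem_singleton, List.not_mem_nil, List.nodup_nil]
    simp [h1.ne, hpq, haq, hab.ne, h3.ne, Ne.symm hbp]

/-- From `t` pairwise-disjoint "connectors" build the `Good` witness. -/
lemma good_of_connectors (H : SimpleGraph V) (t : ℕ) {p q : V} (hpq : p ≠ q)
    (f : Fin t → V × V)
    (h1 : ∀ i, H.Adj p (f i).1)
    (h2 : ∀ i, (f i).1 = (f i).2 ∨ H.Adj (f i).1 (f i).2)
    (h3 : ∀ i, H.Adj (f i).2 q)
    (h4 : ∀ i, (f i).1 ≠ q ∧ (f i).2 ≠ p)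
    (h5 : ∀ i j, i ≠ j → (f i).1 ≠ (f j).1 ∧ (f i).1 ≠ (f j).2 ∧
          (f i).2 ≠ (f j).1 ∧ (f i).2 ≠ (f j).2) :
    Good H t p q := by
  refine ⟨fun i => mkWalk H (f i).1 (f i).2 (h1 i) (h2 i) (h3 i), ?_, ?_, ?_⟩
  · intro i j hij
    by_contra hne
    have hij2 : mkWalk H (f i).1 (f i).2 (h1 i) (h2 i) (h3 i)
        = mkWalk H (f j).1 (f j).2 (h1 j) (h2 j) (h3 j) := hij
    have hmem : (f i).1 ∈ (mkWalk H (f j).1 (f j).2 (h1 j) (h2 j) (h3 j)).support := by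
      rw [← hij2]; exact mkWalk_a_mem H _ _ _ _ _
    rcases mkWalk_support_subset H _ _ (h1 j) (h2 j) (h3 j) _ hmem with h | h | h | h
    · exact (h1 i).ne' h
    · exact (h5 i j hne).1 h
    · exact (h5 i j hne).2.1 h
    · exact (h4 i).1 h
  · intro i
    exact ⟨mkWalk_isPath H _ _ _ _ _ hpq (h4 i).1 (h4 i).2, mkWalk_length H _ _ _ _ _⟩
  · intro i j hij x hxi hxj
    rcases mkWalk_support_subset H _ _ (h1 i) (h2 i) (h3 i) _ hxi with h | h | h | h
    · exact Or.inl h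
    · subst h
      rcases mkWalk_support_subset H _ _ (h1 j) (h2 j) (h3 j) _ hxj with h | h | h | h
      · exact Or.inl h
      · exact absurd h (h5 i j hij).1
      · exact absurd h (h5 i j hij).2.1
      · exact Or.inr h
    · subst h
      rcases mkWalk_support_subset H _ _ (h1 j) (h2 j) (h3 j) _ hxj with h | h | h | h
      · exact Or.inl h
      · exact absurd h (h5 i j hij).2.2.1
      · exact absurd h (h5 i j hij).2.2.2
      · exact Or.inr h
    · exact Or.inr h


variable [Fintype V] [DecidableEq V]

/-- A "gadget" extracted from a red-bad pair `(u,v)`: a blue near-hub structure. -/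
structure Gadget (R : SimpleGraph V) (t : ℕ) where
  u : V
  v : V
  D : Finset V
  X1 : Finset V
  Y1 : Finset V
  hu : u ∈ D
  hv : v ∈ D
  hD : D.card ≤ 2 * t
  hX1card : 3 * t + 2 ≤ X1.card
  hX1blue : ∀ x ∈ X1, Rᶜ.Adj v x
  hbic : ∀ x ∈ X1, ∀ y ∈ Y1, Rᶜ.Adj x y
  hG2 : ∀ w, w ∉ D → ¬ Rᶜ.Adj u w → w ∈ X1
  hG3 : ∀ w, w ∉ D → ¬ Rᶜ.Adj v w → w ∈ Y1

lemma exists_gadget (R : SimpleGraph V) [DecidableRel R.Adj]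
    (t : ℕ) (ht : 0 < t) {u v : V} (huv : u ≠ v)
    (hdeg : 5 * t + 1 ≤ R.degree u) (hbad : ¬ Good R t u v) :
    ∃ g : Gadget R t, g.u = u ∧ g.v = v := by
  classical
  set C : Finset V := R.neighborFinset u ∩ R.neighborFinset v with hCdef
  set X : Finset V := R.neighborFinset u \ (R.neighborFinset v ∪ {v}) with hXdef
  set Y : Finset V := R.neighborFinset v \ (R.neighborFinset u ∪ {u}) with hYdef
  have hXmem : ∀ x ∈ X, R.Adj u x ∧ ¬ R.Adj v x ∧ x ≠ v := by
    intro x hx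
    rw [hXdef] at hx
    simp only [Finset.mem_sdiff, Finset.mem_union, Finset.mem_singleton,
      SimpleGraph.mem_neighborFinset] at hx
    tauto
  have hYmem : ∀ y ∈ Y, R.Adj v y ∧ ¬ R.Adj u y ∧ y ≠ u := by
    intro y hy
    rw [hYdef] at hy
    simp only [Finset.mem_sdiff, Finset.mem_union, Finset.mem_singleton,
      SimpleGraph.mem_neighborFinset] at hy
    tauto
  have hCmem : ∀ c ∈ C, R.Adj u c ∧ R.Adj v c := by
    intro c hc
    rw [hCdef] at hc
    simp only [Finset.mem_inter, SimpleGraph.mem_neighborFinset] at hc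
    exact hc
  -- maximal matching between X and Y
  let valid : Finset (V × V) → Prop := fun M =>
    (∀ e ∈ M, e.1 ∈ X ∧ e.2 ∈ Y ∧ R.Adj e.1 e.2) ∧
    (∀ e ∈ M, ∀ e' ∈ M, e ≠ e' →
      e.1 ≠ e'.1 ∧ e.1 ≠ e'.2 ∧ e.2 ≠ e'.1 ∧ e.2 ≠ e'.2)
  obtain ⟨M, hMmem, hMmax⟩ := Finset.exists_max_image
    ((Finset.univ : Finset (Finset (V × V))).filter (fun M => valid M)) Finset.card
    ⟨∅, by simp [valid]⟩
  rw [Finset.mem_filter] at hMmem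
  have hMvalid : valid M := hMmem.2
  have hMmax' : ∀ M', valid M' → M'.card ≤ M.card := by
    intro M' h
    exact hMmax M' (Finset.mem_filter.mpr ⟨Finset.mem_univ _, h⟩)
  -- the key bound
  have hkey : C.card + M.card < t := by
    by_contra hcon
    push_neg at hcon
    apply hbad
    have hdisjS : Disjoint (C.image (fun c => (c, c))) M := by
      rw [Finset.disjoint_left]
      rintro e he heM
      obtain ⟨c, hc, rfl⟩ := Finset.mem_image.mp he
      have h1 := (hMvalid.1 _ heM).1
      have h2 := (hMvalid.1 _ heM).2.1
      exact (hXmem _ h1).2.1 ((hYmem _ h2).1)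
    set S : Finset (V × V) := C.image (fun c => (c, c)) ∪ M with hSdef
    have hScard : t ≤ S.card := by
      rw [hSdef, Finset.card_union_of_disjoint hdisjS,
        Finset.card_image_of_injective _ (fun a b h => (Prod.mk.injEq _ _ _ _ ▸ h : _ ∧ _).1)]
      omega
    obtain ⟨S', hS'sub, hS'card⟩ := Finset.exists_subset_card_eq hScard
    have hmemS : ∀ e ∈ S', (e.1 ∈ C ∧ e.1 = e.2) ∨ e ∈ M := by
      intro e he
      have := hS'sub he
      rw [hSdef, Finset.mem_union] at this
      rcases this with h | h
      · obtain ⟨c, hc, rfl⟩ := Finset.mem_image.mp h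
        exact Or.inl ⟨hc, rfl⟩
      · exact Or.inr h
    have hcast : t = S'.card := hS'card.symm
    let f : Fin t → V × V := fun i => (S'.equivFin.symm (Fin.cast hcast i)).val
    have hfmem : ∀ i, f i ∈ S' := fun i => (S'.equivFin.symm (Fin.cast hcast i)).property
    have hfinj : Function.Injective f := by
      intro i j hij
      have := Subtype.ext hij
      have := S'.equivFin.symm.injective this
      exact Fin.cast_injective hcast (by simpa using this)
    apply good_of_connectors R t huv f
    · intro i
      rcases hmemS _ (hfmem i) with ⟨hc, _⟩ | hm
      · exact (hCmem _ hc).1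
      · exact (hXmem _ (hMvalid.1 _ hm).1).1
    · intro i
      rcases hmemS _ (hfmem i) with ⟨_, heq⟩ | hm
      · exact Or.inl heq
      · exact Or.inr (hMvalid.1 _ hm).2.2
    · intro i
      rcases hmemS _ (hfmem i) with ⟨hc, heq⟩ | hm
      · exact (heq ▸ (hCmem _ hc).2).symm
      · exact ((hYmem _ (hMvalid.1 _ hm).2.1).1).symm
    · intro i
      rcases hmemS _ (hfmem i) with ⟨hc, heq⟩ | hm
      · exact ⟨(hCmem _ hc).2.ne', heq ▸ (hCmem _ hc).1.ne'⟩
      · exact ⟨(hXmem _ (hMvalid.1 _ hm).1).2.2, (hYmem _ (hMvalid.1 _ hm).2.1).2.2⟩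
    · intro i j hij
      have hfne : f i ≠ f j := fun h => hij (hfinj h)
      rcases hmemS _ (hfmem i) with ⟨hci, heqi⟩ | hmi <;>
        rcases hmemS _ (hfmem j) with ⟨hcj, heqj⟩ | hmj
      · have hthis : (f i).1 ≠ (f j).1 := by
          intro h
          apply hfne
          have h2 : (f i).2 = (f j).2 := by rw [← heqi, ← heqj]; exact h
          exact Prod.ext h h2
        exact ⟨hthis, by rw [← heqj]; exact hthis, by rw [← heqi]; exact hthis,
          by rw [← heqi, ← heqj]; exact hthis⟩
      · -- f i from C, f j ∈ M
        have h1 : (f j).1 ∈ X := (hMvalid.1 _ hmj).1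
        have h2 : (f j).2 ∈ Y := (hMvalid.1 _ hmj).2.1
        have hne1 : (f i).1 ≠ (f j).1 := by
          intro h
          exact (hXmem _ h1).2.1 (h ▸ (hCmem _ hci).2)
        have hne2 : (f i).1 ≠ (f j).2 := by
          intro h
          exact (hYmem _ h2).2.1 (h ▸ (hCmem _ hci).1)
        exact ⟨hne1, hne2, heqi ▸ hne1, heqi ▸ hne2⟩
      · have h1 : (f i).1 ∈ X := (hMvalid.1 _ hmi).1
        have h2 : (f i).2 ∈ Y := (hMvalid.1 _ hmi).2.1
        have hne1 : (f i).1 ≠ (f j).1 := by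
          intro h
          exact (hXmem _ h1).2.1 (h.symm ▸ (hCmem _ hcj).2)
        have hne2 : (f i).2 ≠ (f j).1 := by
          intro h
          exact (hYmem _ h2).2.1 (h.symm ▸ (hCmem _ hcj).1)
        exact ⟨hne1, heqj ▸ hne1, hne2, heqj ▸ hne2⟩
      · exact hMvalid.2 _ hmi _ hmj hfne
  -- build the gadget
  set Xf : Finset V := M.image Prod.fst with hXfdef
  set Ys : Finset V := M.image Prod.snd with hYsdef
  set X1 : Finset V := X \ Xf with hX1def
  set Y1 : Finset V := Y \ Ys with hY1def
  set D : Finset V := insert u (insert v (C ∪ Xf ∪ Ys)) with hDdef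
  have hXfcard : Xf.card ≤ M.card := Finset.card_image_le
  have hYscard : Ys.card ≤ M.card := Finset.card_image_le
  have hNusub : R.neighborFinset u ⊆ X ∪ C ∪ {v} := by
    intro w hw
    simp only [Finset.mem_union, Finset.mem_singleton]
    by_cases h1 : w = v
    · tauto
    by_cases h2 : w ∈ R.neighborFinset v
    · exact Or.inl (Or.inr (by rw [hCdef]; exact Finset.mem_inter.mpr ⟨hw, h2⟩))
    · refine Or.inl (Or.inl ?_)
      rw [hXdef]
      simp only [Finset.mem_sdiff, Finset.mem_union, Finset.mem_singleton]
      tauto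
  have hXcard : 4 * t + 1 ≤ X.card := by
    have h1 : R.degree u ≤ (X ∪ C ∪ {v}).card := by
      rw [← SimpleGraph.card_neighborFinset_eq_degree]
      exact Finset.card_le_card hNusub
    have h2 : (X ∪ C ∪ {v}).card ≤ X.card + C.card + 1 := by
      calc (X ∪ C ∪ {v}).card ≤ (X ∪ C).card + ({v} : Finset V).card := Finset.card_union_le _ _
        _ ≤ X.card + C.card + 1 := by
            have := Finset.card_union_le X C
            simp only [Finset.card_singleton]
            omega
    omega
  have hX1card : 3 * t + 2 ≤ X1.card := by
    have := Finset.le_card_sdiff Xf X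
    rw [← hX1def] at this
    omega
  have hDcard : D.card ≤ 2 * t := by
    have h1 : D.card ≤ (C ∪ Xf ∪ Ys).card + 2 := by
      rw [hDdef]
      have := Finset.card_insert_le v (C ∪ Xf ∪ Ys)
      have := Finset.card_insert_le u (insert v (C ∪ Xf ∪ Ys))
      omega
    have h2 : (C ∪ Xf ∪ Ys).card ≤ C.card + Xf.card + Ys.card := by
      have := Finset.card_union_le (C ∪ Xf) Ys
      have := Finset.card_union_le C Xf
      omega
    omega
  have hCD : C ⊆ D := by
    intro c hc
    rw [hDdef]
    simp only [Finset.mem_insert, Finset.mem_union]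
    tauto
  have hXfD : Xf ⊆ D := by
    intro c hc
    rw [hDdef]
    simp only [Finset.mem_insert, Finset.mem_union]
    tauto
  have hYsD : Ys ⊆ D := by
    intro c hc
    rw [hDdef]
    simp only [Finset.mem_insert, Finset.mem_union]
    tauto
  have huD : u ∈ D := Finset.mem_insert_self _ _
  have hvD : v ∈ D := by
    rw [hDdef]; simp
  -- biclique
  have hbic : ∀ x ∈ X1, ∀ y ∈ Y1, Rᶜ.Adj x y := by
    intro x hx y hy
    rw [hX1def, Finset.mem_sdiff] at hx
    rw [hY1def, Finset.mem_sdiff] at hy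
    have hxX := hx.1
    have hyY := hy.1
    have hxy : x ≠ y := by
      intro h
      exact (hXmem _ hxX).2.1 (h ▸ (hYmem _ hyY).1)
    rw [SimpleGraph.compl_adj]
    refine ⟨hxy, ?_⟩
    intro hadj
    have hnew : (x, y) ∉ M := by
      intro h
      exact hx.2 (Finset.mem_image_of_mem Prod.fst h)
    have hvalid' : valid (insert (x, y) M) := by
      constructor
      · intro e he
        rcases Finset.mem_insert.mp he with rfl | he'
        · exact ⟨hxX, hyY, hadj⟩
        · exact hMvalid.1 _ he'
      · intro e he e' he' hne
        rcases Finset.mem_insert.mp he with rfl | heM <;>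
          rcases Finset.mem_insert.mp he' with h' | he'M
        · exact absurd h'.symm hne
        · -- e = (x,y) new, e' old
          have h1 : e'.1 ∈ X := (hMvalid.1 _ he'M).1
          have h2 : e'.2 ∈ Y := (hMvalid.1 _ he'M).2.1
          refine ⟨?_, ?_, ?_, ?_⟩
          · intro h; apply hx.2; rw [show x = e'.1 from h]
            exact Finset.mem_image_of_mem Prod.fst he'M
          · intro h
            exact (hXmem _ hxX).2.1 (by rw [show x = e'.2 from h]; exact (hYmem _ h2).1)
          · intro h
            exact (hXmem _ h1).2.1 (by rw [← show y = e'.1 from h]; exact (hYmem _ hyY).1)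
          · intro h; apply hy.2; rw [show y = e'.2 from h]
            exact Finset.mem_image_of_mem Prod.snd he'M
        · subst h'
          have h1 : e.1 ∈ X := (hMvalid.1 _ heM).1
          have h2 : e.2 ∈ Y := (hMvalid.1 _ heM).2.1
          refine ⟨?_, ?_, ?_, ?_⟩
          · intro h; apply hx.2; rw [← show e.1 = x from h]
            exact Finset.mem_image_of_mem Prod.fst heM
          · intro h
            exact (hXmem _ h1).2.1 (by rw [show e.1 = y from h]; exact (hYmem _ hyY).1)
          · intro h
            exact (hXmem _ hxX).2.1 (by rw [← show e.2 = x from h]; exact (hYmem _ h2).1)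
          · intro h; apply hy.2; rw [← show e.2 = y from h]
            exact Finset.mem_image_of_mem Prod.snd heM
        · exact hMvalid.2 _ heM _ he'M hne
    have := hMmax' _ hvalid'
    rw [Finset.card_insert_of_notMem hnew] at this
    omega
  refine ⟨⟨u, v, D, X1, Y1, huD, hvD, hDcard, hX1card, ?_, hbic, ?_, ?_⟩, rfl, rfl⟩
  · intro x hx
    rw [hX1def, Finset.mem_sdiff] at hx
    rw [SimpleGraph.compl_adj]
    exact ⟨Ne.symm (hXmem _ hx.1).2.2, fun h => (hXmem _ hx.1).2.1 h⟩
  · intro w hwD hw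
    rw [SimpleGraph.compl_adj] at hw
    push_neg at hw
    have hwu : w ≠ u := fun h => hwD (h ▸ huD)
    have hadj : R.Adj u w := hw (Ne.symm hwu)
    rw [hX1def, Finset.mem_sdiff]
    constructor
    · rw [hXdef]
      simp only [Finset.mem_sdiff, Finset.mem_union, Finset.mem_singleton,
        SimpleGraph.mem_neighborFinset]
      refine ⟨hadj, ?_⟩
      push_neg
      constructor
      · intro hvw
        apply hwD
        apply hCD
        rw [hCdef]
        simp only [Finset.mem_inter, SimpleGraph.mem_neighborFinset]
        exact ⟨hadj, hvw⟩
      · intro h; exact hwD (h ▸ hvD)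
    · intro h; exact hwD (hXfD h)
  · intro w hwD hw
    rw [SimpleGraph.compl_adj] at hw
    push_neg at hw
    have hwv : w ≠ v := fun h => hwD (h ▸ hvD)
    have hadj : R.Adj v w := hw (Ne.symm hwv)
    rw [hY1def, Finset.mem_sdiff]
    constructor
    · rw [hYdef]
      simp only [Finset.mem_sdiff, Finset.mem_union, Finset.mem_singleton,
        SimpleGraph.mem_neighborFinset]
      refine ⟨hadj, ?_⟩
      push_neg
      constructor
      · intro huw
        apply hwD
        apply hCD
        rw [hCdef]
        simp only [Finset.mem_inter, SimpleGraph.mem_neighborFinset]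
        exact ⟨huw, hadj⟩
      · intro h; exact hwD (h ▸ huD)
    · intro h; exact hwD (hYsD h)

lemma count_swap {α β : Type*} (s : Finset α) (T : Finset β)
    (r : α → β → Prop) [∀ a b, Decidable (r a b)] :
    ∑ a ∈ s, (T.filter (fun b => r a b)).card = ∑ b ∈ T, (s.filter (fun a => r a b)).card := by
  simp only [Finset.card_filter]
  exact Finset.sum_comm

lemma caseA (R : SimpleGraph V) [DecidableRel R.Adj] (t : ℕ) (ht : 0 < t)
    (hP : 3 * t ≤ (Finset.univ.filter (fun v => R.degree v ≤ 5 * t)).card) :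
    ∃ W : Finset V, Fintype.card V - 28 * t ≤ W.card ∧ WellConnected Rᶜ (↑W) t 3 := by
  classical
  obtain ⟨Q, hQsub, hQcard⟩ := Finset.exists_subset_card_eq hP
  have hQdeg : ∀ x ∈ Q, R.degree x ≤ 5 * t := fun x hx => (Finset.mem_filter.mp (hQsub hx)).2
  set D : Finset V := Finset.univ.filter
    (fun w => t ≤ (Q.filter (fun x => R.Adj w x)).card) with hDdef
  have hsum : ∑ w ∈ Finset.univ, (Q.filter (fun x => R.Adj w x)).card ≤ 15 * t * t := by
    rw [count_swap]
    have hbd : ∀ x ∈ Q, (Finset.univ.filter (fun w => R.Adj w x)).card ≤ 5 * t := by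
      intro x hx
      have heq : Finset.univ.filter (fun w => R.Adj w x) = R.neighborFinset x := by
        ext w
        simp [SimpleGraph.mem_neighborFinset, SimpleGraph.adj_comm]
      rw [heq, SimpleGraph.card_neighborFinset_eq_degree]
      exact hQdeg x hx
    calc ∑ x ∈ Q, (Finset.univ.filter (fun w => R.Adj w x)).card
        ≤ ∑ _x ∈ Q, 5 * t := Finset.sum_le_sum hbd
      _ = 3 * t * (5 * t) := by rw [Finset.sum_const, hQcard, smul_eq_mul]
      _ ≤ 15 * t * t := by ring_nf; omega
  have hDcard : D.card ≤ 15 * t := by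
    have h1 : D.card * t ≤ ∑ w ∈ D, (Q.filter (fun x => R.Adj w x)).card := by
      have := Finset.card_nsmul_le_sum D (fun w => (Q.filter (fun x => R.Adj w x)).card) t
        (fun w hw => (Finset.mem_filter.mp hw).2)
      simpa [smul_eq_mul] using this
    have h2 : ∑ w ∈ D, (Q.filter (fun x => R.Adj w x)).card
        ≤ ∑ w ∈ Finset.univ, (Q.filter (fun x => R.Adj w x)).card :=
      Finset.sum_le_sum_of_subset (Finset.subset_univ D)
    have h3 : D.card * t ≤ 15 * t * t := le_trans h1 (le_trans h2 hsum)
    have h4 : D.card * t ≤ 15 * t * t := h3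
    nlinarith [h4, ht]
  refine ⟨Finset.univ \ D, ?_, ?_⟩
  · rw [Finset.card_sdiff_of_subset (Finset.subset_univ D), Finset.card_univ]
    omega
  · intro p hp q hq hpq
    have hpW : p ∉ D := by
      have := Finset.mem_coe.mp hp
      rw [Finset.mem_sdiff] at this
      exact this.2
    have hqW : q ∉ D := by
      have := Finset.mem_coe.mp hq
      rw [Finset.mem_sdiff] at this
      exact this.2
    have hpD : (Q.filter (fun x => R.Adj p x)).card < t := by
      by_contra h
      exact hpW (Finset.mem_filter.mpr ⟨Finset.mem_univ _, by omega⟩)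
    have hqD : (Q.filter (fun x => R.Adj q x)).card < t := by
      by_contra h
      exact hqW (Finset.mem_filter.mpr ⟨Finset.mem_univ _, by omega⟩)
    set T : Finset V := Q \ ((Q.filter (fun x => R.Adj p x)) ∪
      (Q.filter (fun x => R.Adj q x)) ∪ {p, q}) with hTdef
    have hTcard : t ≤ T.card := by
      have h1 := Finset.le_card_sdiff ((Q.filter (fun x => R.Adj p x)) ∪
        (Q.filter (fun x => R.Adj q x)) ∪ {p, q}) Q
      have h2 : ((Q.filter (fun x => R.Adj p x)) ∪ (Q.filter (fun x => R.Adj q x))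
          ∪ ({p, q} : Finset V)).card ≤ (t - 1) + (t - 1) + 2 := by
        have hu1 := Finset.card_union_le ((Q.filter (fun x => R.Adj p x)) ∪
          (Q.filter (fun x => R.Adj q x))) ({p, q} : Finset V)
        have hu2 := Finset.card_union_le (Q.filter (fun x => R.Adj p x))
          (Q.filter (fun x => R.Adj q x))
        have hpair : ({p, q} : Finset V).card ≤ 2 := Finset.card_le_two
        omega
      rw [hTdef]
      omega
    obtain ⟨T', hT'sub, hT'card⟩ := Finset.exists_subset_card_eq hTcard
    have hTmem : ∀ z ∈ T', z ∈ Q ∧ ¬ R.Adj p z ∧ ¬ R.Adj q z ∧ z ≠ p ∧ z ≠ q := by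
      intro z hz
      have hzz := hT'sub hz
      rw [hTdef, Finset.mem_sdiff, Finset.mem_union, Finset.mem_union, Finset.mem_filter,
        Finset.mem_filter, Finset.mem_insert, Finset.mem_singleton] at hzz
      push_neg at hzz
      exact ⟨hzz.1, (hzz.2.1.1 hzz.1), (hzz.2.1.2 hzz.1), hzz.2.2⟩
    have hcast : t = T'.card := hT'card.symm
    set c : Fin t → V := fun i => (T'.equivFin.symm (Fin.cast hcast i)).val with hcdef
    have hcmem : ∀ i, c i ∈ T' := fun i => (T'.equivFin.symm (Fin.cast hcast i)).property
    have hcinj : Function.Injective c := by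
      intro i j hij
      have h1 := Subtype.ext hij
      have h2 := T'.equivFin.symm.injective h1
      exact Fin.cast_injective hcast (by simpa using h2)
    have hgood : Good Rᶜ t p q := by
      apply good_of_connectors Rᶜ t hpq (fun i => (c i, c i))
      · intro i
        rw [SimpleGraph.compl_adj]
        exact ⟨Ne.symm (hTmem _ (hcmem i)).2.2.2.1, fun h => (hTmem _ (hcmem i)).2.1 h⟩
      · intro i
        exact Or.inl rfl
      · intro i
        rw [SimpleGraph.compl_adj]
        refine ⟨(hTmem _ (hcmem i)).2.2.2.2, fun h => (hTmem _ (hcmem i)).2.2.1 ?_⟩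
        exact (SimpleGraph.adj_comm _ _ _).mp h
      · intro i
        exact ⟨(hTmem _ (hcmem i)).2.2.2.2, (hTmem _ (hcmem i)).2.2.2.1⟩
      · intro i j hij
        have : c i ≠ c j := fun h => hij (hcinj h)
        exact ⟨this, this, this, this⟩
    exact hgood

lemma caseB1 (R : SimpleGraph V) [DecidableRel R.Adj] (t : ℕ) (ht : 0 < t)
    (g : Fin (3 * t) → Gadget R t)
    (hdisj : ∀ i j, i ≠ j → (g i).u ≠ (g j).u ∧ (g i).u ≠ (g j).v ∧
      (g i).v ≠ (g j).u ∧ (g i).v ≠ (g j).v) :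
    ∃ W : Finset V, Fintype.card V - 28 * t ≤ W.card ∧ WellConnected Rᶜ (↑W) t 3 := by
  classical
  set cnt : V → ℕ := fun w => (Finset.univ.filter (fun i : Fin (3 * t) => w ∈ (g i).D)).card
    with hcntdef
  set Dstar : Finset V := Finset.univ.filter (fun w => t ≤ cnt w) with hDdef
  have hsum : ∑ w ∈ Finset.univ, cnt w ≤ 6 * t * t := by
    rw [hcntdef]
    rw [count_swap (r := fun (w : V) (i : Fin (3 * t)) => w ∈ (g i).D)]
    have hbd : ∀ i ∈ (Finset.univ : Finset (Fin (3 * t))),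
        (Finset.univ.filter (fun w => w ∈ (g i).D)).card ≤ 2 * t := by
      intro i _
      have heq : Finset.univ.filter (fun w => w ∈ (g i).D) = (g i).D := by
        ext w; simp
      rw [heq]
      exact (g i).hD
    calc ∑ i ∈ (Finset.univ : Finset (Fin (3 * t))),
          (Finset.univ.filter (fun w => w ∈ (g i).D)).card
        ≤ ∑ _i ∈ (Finset.univ : Finset (Fin (3 * t))), 2 * t := Finset.sum_le_sum hbd
      _ = 3 * t * (2 * t) := by
          rw [Finset.sum_const, Finset.card_univ, Fintype.card_fin, smul_eq_mul]
      _ ≤ 6 * t * t := by ring_nf; omega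
  have hDcard : Dstar.card ≤ 6 * t := by
    have h1 : Dstar.card * t ≤ ∑ w ∈ Dstar, cnt w := by
      have := Finset.card_nsmul_le_sum Dstar cnt t
        (fun w hw => (Finset.mem_filter.mp hw).2)
      simpa [smul_eq_mul] using this
    have h2 : ∑ w ∈ Dstar, cnt w ≤ ∑ w ∈ Finset.univ, cnt w :=
      Finset.sum_le_sum_of_subset (Finset.subset_univ Dstar)
    have h3 : Dstar.card * t ≤ 6 * t * t := le_trans h1 (le_trans h2 hsum)
    nlinarith [h3, ht]
  refine ⟨Finset.univ \ Dstar, ?_, ?_⟩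
  · rw [Finset.card_sdiff_of_subset (Finset.subset_univ Dstar), Finset.card_univ]
    omega
  · intro p hp q hq hpq
    have hpW : p ∉ Dstar := by
      have := Finset.mem_coe.mp hp
      rw [Finset.mem_sdiff] at this
      exact this.2
    have hqW : q ∉ Dstar := by
      have := Finset.mem_coe.mp hq
      rw [Finset.mem_sdiff] at this
      exact this.2
    have hpcnt : cnt p < t := by
      by_contra h
      exact hpW (Finset.mem_filter.mpr ⟨Finset.mem_univ _, by omega⟩)
    have hqcnt : cnt q < t := by
      by_contra h
      exact hqW (Finset.mem_filter.mpr ⟨Finset.mem_univ _, by omega⟩)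
    set I : Finset (Fin (3 * t)) := Finset.univ.filter
      (fun i => p ∉ (g i).D ∧ q ∉ (g i).D) with hIdef
    have hIcard : t ≤ I.card := by
      have hsub : (Finset.univ : Finset (Fin (3 * t))) ⊆ I ∪
          (Finset.univ.filter (fun i => p ∈ (g i).D)) ∪
          (Finset.univ.filter (fun i => q ∈ (g i).D)) := by
        intro i _
        by_cases h1 : p ∈ (g i).D
        · simp [h1]
        by_cases h2 : q ∈ (g i).D
        · simp [h2]
        · simp [hIdef, h1, h2]
      have hc := Finset.card_le_card hsub
      have hu1 := Finset.card_union_le (I ∪ (Finset.univ.filter (fun i => p ∈ (g i).D)))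
        (Finset.univ.filter (fun i => q ∈ (g i).D))
      have hu2 := Finset.card_union_le I (Finset.univ.filter (fun i => p ∈ (g i).D))
      rw [Finset.card_univ, Fintype.card_fin] at hc
      have hcp : (Finset.univ.filter (fun i => p ∈ (g i).D)).card = cnt p := rfl
      have hcq : (Finset.univ.filter (fun i => q ∈ (g i).D)).card = cnt q := rfl
      omega
    obtain ⟨I', hI'sub, hI'card⟩ := Finset.exists_subset_card_eq hIcard
    have hcast : t = I'.card := hI'card.symm
    set idx : Fin t → Fin (3 * t) := fun i => (I'.equivFin.symm (Fin.cast hcast i)).val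
      with hidxdef
    have hidxmem : ∀ i, idx i ∈ I' := fun i => (I'.equivFin.symm (Fin.cast hcast i)).property
    have hidxinj : Function.Injective idx := by
      intro i j hij
      have h1 := Subtype.ext hij
      have h2 := I'.equivFin.symm.injective h1
      exact Fin.cast_injective hcast (by simpa using h2)
    have hpqD : ∀ i, p ∉ (g (idx i)).D ∧ q ∉ (g (idx i)).D := by
      intro i
      have := hI'sub (hidxmem i)
      rw [hIdef, Finset.mem_filter] at this
      exact this.2
    set B : Finset V := insert p (insert q ((I'.image (fun j => (g j).u)) ∪
      (I'.image (fun j => (g j).v)))) with hBdef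
    have hBcard : B.card ≤ 2 * t + 2 := by
      have h1 := Finset.card_insert_le p (insert q ((I'.image (fun j => (g j).u)) ∪
        (I'.image (fun j => (g j).v))))
      have h2 := Finset.card_insert_le q ((I'.image (fun j => (g j).u)) ∪
        (I'.image (fun j => (g j).v)))
      have h3 := Finset.card_union_le (I'.image (fun j => (g j).u))
        (I'.image (fun j => (g j).v))
      have h4 : (I'.image (fun j => (g j).u)).card ≤ t := by
        have := Finset.card_image_le (s := I') (f := fun j => (g j).u)
        omega
      have h5 : (I'.image (fun j => (g j).v)).card ≤ t := by
        have := Finset.card_image_le (s := I') (f := fun j => (g j).v)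
        omega
      rw [hBdef]
      omega
    have huB : ∀ i : Fin t, (g (idx i)).u ∈ B := by
      intro i
      rw [hBdef]
      apply Finset.mem_insert_of_mem
      apply Finset.mem_insert_of_mem
      exact Finset.mem_union_left _ (Finset.mem_image_of_mem _ (hidxmem i))
    have hvB : ∀ i : Fin t, (g (idx i)).v ∈ B := by
      intro i
      rw [hBdef]
      apply Finset.mem_insert_of_mem
      apply Finset.mem_insert_of_mem
      exact Finset.mem_union_right _ (Finset.mem_image_of_mem _ (hidxmem i))
    have hpB : p ∈ B := Finset.mem_insert_self _ _
    have hqB : q ∈ B := by rw [hBdef]; simp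
    set S : Fin t → Finset V := fun i => (g (idx i)).X1 \ B with hSdef
    have hScard : ∀ i, t ≤ (S i).card := by
      intro i
      have h1 := Finset.le_card_sdiff B ((g (idx i)).X1)
      have h2 := (g (idx i)).hX1card
      have h3 := hBcard
      show t ≤ ((g (idx i)).X1 \ B).card
      omega
    have hall : ∀ s : Finset (Fin t), s.card ≤ (s.biUnion S).card := by
      intro s
      rcases s.eq_empty_or_nonempty with rfl | ⟨i, hi⟩
      · simp
      · calc s.card ≤ t := by
              have := Finset.card_le_univ s
              simpa using this
          _ ≤ (S i).card := hScard i
          _ ≤ (s.biUnion S).card := Finset.card_le_card (Finset.subset_biUnion_of_mem S hi)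
    obtain ⟨x', hx'inj, hx'mem⟩ :=
      (Finset.all_card_le_biUnion_card_iff_exists_injective S).mp hall
    have hx'X1 : ∀ i, x' i ∈ (g (idx i)).X1 := by
      intro i
      have := hx'mem i
      rw [hSdef, Finset.mem_sdiff] at this
      exact this.1
    have hx'B : ∀ i, x' i ∉ B := by
      intro i
      have := hx'mem i
      rw [hSdef, Finset.mem_sdiff] at this
      exact this.2
    have hx'p : ∀ i, x' i ≠ p := fun i h => hx'B i (h ▸ hpB)
    have hx'q : ∀ i, x' i ≠ q := fun i h => hx'B i (h ▸ hqB)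
    have hx'u : ∀ i j, x' i ≠ (g (idx j)).u := fun i j h => hx'B i (h ▸ huB j)
    have hx'v : ∀ i j, x' i ≠ (g (idx j)).v := fun i j h => hx'B i (h ▸ hvB j)
    have key : ∀ i : Fin t, ∃ e : V × V, Rᶜ.Adj p e.1 ∧ (e.1 = e.2 ∨ Rᶜ.Adj e.1 e.2) ∧
        Rᶜ.Adj e.2 q ∧ e.1 ≠ q ∧ e.2 ≠ p ∧
        (e.1 = (g (idx i)).u ∨ e.1 = (g (idx i)).v ∨ e.1 = x' i) ∧
        (e.2 = (g (idx i)).u ∨ e.2 = (g (idx i)).v ∨ e.2 = x' i) := by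
      intro i
      obtain ⟨hpD, hqD⟩ := hpqD i
      have hup' : (g (idx i)).u ≠ p := fun h => hpD (h ▸ (g (idx i)).hu)
      have huq' : (g (idx i)).u ≠ q := fun h => hqD (h ▸ (g (idx i)).hu)
      have hvp' : (g (idx i)).v ≠ p := fun h => hpD (h ▸ (g (idx i)).hv)
      have hvq' : (g (idx i)).v ≠ q := fun h => hqD (h ▸ (g (idx i)).hv)
      by_cases hu : Rᶜ.Adj (g (idx i)).u p ∧ Rᶜ.Adj (g (idx i)).u q
      · exact ⟨((g (idx i)).u, (g (idx i)).u), hu.1.symm, Or.inl rfl, hu.2, huq', hup',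
          Or.inl rfl, Or.inl rfl⟩
      by_cases hv : Rᶜ.Adj (g (idx i)).v p ∧ Rᶜ.Adj (g (idx i)).v q
      · exact ⟨((g (idx i)).v, (g (idx i)).v), hv.1.symm, Or.inl rfl, hv.2, hvq', hvp',
          Or.inr (Or.inl rfl), Or.inr (Or.inl rfl)⟩
      by_cases hup : Rᶜ.Adj (g (idx i)).u p
      · -- q ∈ X1, p ∈ Y1; connector (x' i, v)
        have hq1 : q ∈ (g (idx i)).X1 := (g (idx i)).hG2 q hqD (fun h => hu ⟨hup, h⟩)
        have hvq : Rᶜ.Adj (g (idx i)).v q := (g (idx i)).hX1blue q hq1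
        have hvp : ¬ Rᶜ.Adj (g (idx i)).v p := fun h => hv ⟨h, hvq⟩
        have hp1 : p ∈ (g (idx i)).Y1 := (g (idx i)).hG3 p hpD hvp
        refine ⟨(x' i, (g (idx i)).v), ?_, ?_, hvq, hx'q i, hvp',
          Or.inr (Or.inr rfl), Or.inr (Or.inl rfl)⟩
        · exact ((g (idx i)).hbic _ (hx'X1 i) _ hp1).symm
        · exact Or.inr ((g (idx i)).hX1blue _ (hx'X1 i)).symm
      · -- p ∈ X1, q ∈ Y1; connector (v, x' i)
        have hp1 : p ∈ (g (idx i)).X1 := (g (idx i)).hG2 p hpD hup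
        have hvp : Rᶜ.Adj (g (idx i)).v p := (g (idx i)).hX1blue p hp1
        have hvq : ¬ Rᶜ.Adj (g (idx i)).v q := fun h => hv ⟨hvp, h⟩
        have hq1 : q ∈ (g (idx i)).Y1 := (g (idx i)).hG3 q hqD hvq
        refine ⟨((g (idx i)).v, x' i), hvp.symm, ?_, ?_, hvq', hx'p i,
          Or.inr (Or.inl rfl), Or.inr (Or.inr rfl)⟩
        · exact Or.inr ((g (idx i)).hX1blue _ (hx'X1 i))
        · exact (g (idx i)).hbic _ (hx'X1 i) _ hq1
    choose f hf using key
    have hsep : ∀ i j : Fin t, i ≠ j → ∀ a b : V,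
        (a = (g (idx i)).u ∨ a = (g (idx i)).v ∨ a = x' i) →
        (b = (g (idx j)).u ∨ b = (g (idx j)).v ∨ b = x' j) → a ≠ b := by
      intro i j hij a b ha hb
      have hidxne : idx i ≠ idx j := fun h => hij (hidxinj h)
      have hd := hdisj _ _ hidxne
      rcases ha with rfl | rfl | rfl <;> rcases hb with rfl | rfl | rfl
      · exact hd.1
      · exact hd.2.1
      · exact Ne.symm (hx'u j i)
      · exact hd.2.2.1
      · exact hd.2.2.2
      · exact Ne.symm (hx'v j i)
      · exact hx'u i j
      · exact hx'v i j
      · exact fun h => hij (hx'inj h)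
    have hgood : Good Rᶜ t p q := by
      apply good_of_connectors Rᶜ t hpq f
      · exact fun i => (hf i).1
      · exact fun i => (hf i).2.1
      · exact fun i => (hf i).2.2.1
      · exact fun i => ⟨(hf i).2.2.2.1, (hf i).2.2.2.2.1⟩
      · intro i j hij
        exact ⟨hsep i j hij _ _ (hf i).2.2.2.2.2.1 (hf j).2.2.2.2.2.1,
          hsep i j hij _ _ (hf i).2.2.2.2.2.1 (hf j).2.2.2.2.2.2,
          hsep i j hij _ _ (hf i).2.2.2.2.2.2 (hf j).2.2.2.2.2.1,
          hsep i j hij _ _ (hf i).2.2.2.2.2.2 (hf j).2.2.2.2.2.2⟩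
    exact hgood


end WCAux

/-- For every `t ≥ 1` and every two-coloring of `K_n`, there is a vertex
subset `W` with `|W| ≥ n - 28t` that is `(t,3)`-well-connected in one of the colors. -/


theorem exists_well_connected_subset {V : Type*} [Fintype V] (R : SimpleGraph V)
    (t : ℕ) (ht : 0 < t) :
    ∃ W : Finset V, Fintype.card V - 28 * t ≤ W.card ∧
      (WellConnected R (↑W) t 3 ∨ WellConnected Rᶜ (↑W) t 3) := by
  classical
  by_cases hA : 3 * t ≤ (Finset.univ.filter (fun v => R.degree v ≤ 5 * t)).card
  · obtain ⟨W, h1, h2⟩ := WCAux.caseA R t ht hA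
    exact ⟨W, h1, Or.inr h2⟩
  · push_neg at hA
    set Pst : Finset V := Finset.univ.filter (fun v => R.degree v ≤ 5 * t) with hPdef
    let valid : Finset (V × V) → Prop := fun M =>
      (∀ e ∈ M, e.1 ∉ Pst ∧ e.2 ∉ Pst ∧ e.1 ≠ e.2 ∧ ¬ WCAux.Good R t e.1 e.2) ∧
      (∀ e ∈ M, ∀ e' ∈ M, e ≠ e' → e.1 ≠ e'.1 ∧ e.1 ≠ e'.2 ∧ e.2 ≠ e'.1 ∧ e.2 ≠ e'.2)
    obtain ⟨M, hMmem, hMmax⟩ := Finset.exists_max_image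
      ((Finset.univ : Finset (Finset (V × V))).filter (fun M => valid M)) Finset.card
      ⟨∅, by simp [valid]⟩
    rw [Finset.mem_filter] at hMmem
    have hMvalid : valid M := hMmem.2
    have hMmax' : ∀ M', valid M' → M'.card ≤ M.card := fun M' h =>
      hMmax M' (Finset.mem_filter.mpr ⟨Finset.mem_univ _, h⟩)
    by_cases hB : 3 * t ≤ M.card
    · -- many disjoint bad pairs: gadget case
      obtain ⟨M'', hM''sub, hM''card⟩ := Finset.exists_subset_card_eq hB
      have hcast : 3 * t = M''.card := hM''card.symm
      set fam : Fin (3 * t) → V × V := fun i => (M''.equivFin.symm (Fin.cast hcast i)).val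
        with hfamdef
      have hfammem : ∀ i, fam i ∈ M'' :=
        fun i => (M''.equivFin.symm (Fin.cast hcast i)).property
      have hfaminj : Function.Injective fam := by
        intro i j hij
        have h1 := Subtype.ext hij
        have h2 := M''.equivFin.symm.injective h1
        exact Fin.cast_injective hcast (by simpa using h2)
      have hgad : ∀ i, ∃ g : WCAux.Gadget R t, g.u = (fam i).1 ∧ g.v = (fam i).2 := by
        intro i
        have hmemM : fam i ∈ M := hM''sub (hfammem i)
        obtain ⟨h1P, h2P, hne, hbad⟩ := hMvalid.1 _ hmemM
        have hdeg : 5 * t + 1 ≤ R.degree (fam i).1 := by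
          rw [hPdef] at h1P
          simp only [Finset.mem_filter, Finset.mem_univ, true_and, not_le] at h1P
          omega
        exact WCAux.exists_gadget R t ht hne hdeg hbad
      choose g hgu hgv using hgad
      have hdisj : ∀ i j, i ≠ j → (g i).u ≠ (g j).u ∧ (g i).u ≠ (g j).v ∧
          (g i).v ≠ (g j).u ∧ (g i).v ≠ (g j).v := by
        intro i j hij
        have hne : fam i ≠ fam j := fun h => hij (hfaminj h)
        have hpw := hMvalid.2 _ (hM''sub (hfammem i)) _ (hM''sub (hfammem j)) hne
        rw [hgu i, hgv i, hgu j, hgv j]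
        exact hpw
      obtain ⟨W, h1, h2⟩ := WCAux.caseB1 R t ht g hdisj
      exact ⟨W, h1, Or.inr h2⟩
    · -- few disjoint bad pairs: delete them and the low-degree set, red works
      push_neg at hB
      set Del : Finset V := Pst ∪ M.image Prod.fst ∪ M.image Prod.snd with hDeldef
      have hDelcard : Del.card ≤ 28 * t := by
        have h1 := Finset.card_union_le (Pst ∪ M.image Prod.fst) (M.image Prod.snd)
        have h2 := Finset.card_union_le Pst (M.image Prod.fst)
        have h3 : (M.image Prod.fst).card ≤ M.card := Finset.card_image_le
        have h4 : (M.image Prod.snd).card ≤ M.card := Finset.card_image_le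
        rw [hDeldef]
        omega
      refine ⟨Finset.univ \ Del, ?_, Or.inl ?_⟩
      · rw [Finset.card_sdiff_of_subset (Finset.subset_univ Del), Finset.card_univ]
        omega
      · intro p hp q hq hpq
        have hpW : p ∉ Del := by
          have := Finset.mem_coe.mp hp
          rw [Finset.mem_sdiff] at this
          exact this.2
        have hqW : q ∉ Del := by
          have := Finset.mem_coe.mp hq
          rw [Finset.mem_sdiff] at this
          exact this.2
        have hpP : p ∉ Pst := fun h => hpW (by
          rw [hDeldef]
          exact Finset.mem_union_left _ (Finset.mem_union_left _ h))
        have hqP : q ∉ Pst := fun h => hqW (by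
          rw [hDeldef]
          exact Finset.mem_union_left _ (Finset.mem_union_left _ h))
        by_contra hbadgoal
        have hbad : ¬ WCAux.Good R t p q := hbadgoal
        have hnew : (p, q) ∉ M := by
          intro h
          apply hpW
          rw [hDeldef]
          exact Finset.mem_union_left _
            (Finset.mem_union_right _ (Finset.mem_image_of_mem Prod.fst h))
        have hvalid' : valid (insert (p, q) M) := by
          constructor
          · intro e he
            rcases Finset.mem_insert.mp he with rfl | heM
            · exact ⟨hpP, hqP, hpq, hbad⟩
            · exact hMvalid.1 _ heM
          · intro e he e' he' hne
            rcases Finset.mem_insert.mp he with rfl | heM <;>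
              rcases Finset.mem_insert.mp he' with h' | he'M
            · exact absurd h'.symm hne
            · refine ⟨?_, ?_, ?_, ?_⟩
              · intro h
                apply hpW
                rw [hDeldef, show p = e'.1 from h]
                exact Finset.mem_union_left _
                  (Finset.mem_union_right _ (Finset.mem_image_of_mem Prod.fst he'M))
              · intro h
                apply hpW
                rw [hDeldef, show p = e'.2 from h]
                exact Finset.mem_union_right _ (Finset.mem_image_of_mem Prod.snd he'M)
              · intro h
                apply hqW
                rw [hDeldef, show q = e'.1 from h]
                exact Finset.mem_union_left _
                  (Finset.mem_union_right _ (Finset.mem_image_of_mem Prod.fst he'M))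
              · intro h
                apply hqW
                rw [hDeldef, show q = e'.2 from h]
                exact Finset.mem_union_right _ (Finset.mem_image_of_mem Prod.snd he'M)
            · subst h'
              refine ⟨?_, ?_, ?_, ?_⟩
              · intro h
                apply hpW
                rw [hDeldef, ← show e.1 = p from h]
                exact Finset.mem_union_left _
                  (Finset.mem_union_right _ (Finset.mem_image_of_mem Prod.fst heM))
              · intro h
                apply hqW
                rw [hDeldef, ← show e.1 = q from h]
                exact Finset.mem_union_left _
                  (Finset.mem_union_right _ (Finset.mem_image_of_mem Prod.fst heM))
              · intro h
                apply hpW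
                rw [hDeldef, ← show e.2 = p from h]
                exact Finset.mem_union_right _ (Finset.mem_image_of_mem Prod.snd heM)
              · intro h
                apply hqW
                rw [hDeldef, ← show e.2 = q from h]
                exact Finset.mem_union_right _ (Finset.mem_image_of_mem Prod.snd heM)
            · exact hMvalid.2 _ heM _ he'M hne
        have hle := hMmax' _ hvalid'
        rw [Finset.card_insert_of_notMem hnew] at hle
        omega
end
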